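/- arXiv:1911.04569 — 5 statements merged into one kernel-verified Lean document; each statement's English description precedes it below -/
import Mathlib

section
/- There exists h̄ > 0 such that for every real p ≥ 1 there is a constant C_p > 0 with: for every integer N ≥ 1 with h = T/N < h̄ and every 0 ≤ n ≤ N, E[(Y^h_n)^p]^{1/p} ≤ C_p, and for every 0 ≤ n ≤ N−1, E[|Y^h_{n+1} − Y^h_n|^p]^{1/p} ≤ C_p √h. -/
open MeasureTheory

noncomputable section

open Classical in
/-- The node `y^n_k` of the CIR 'multiple jumps' binomial tree with time step `h`:
`y^n_k = (√Y₀ + (σ/2)(2k-n)√h)²` if `√Y₀ + (σ/2)(2k-n)√h > 0`, and `0` otherwise. -/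
def ynode (σ Y0 h : ℝ) (n k : ℕ) : ℝ :=
  if 0 < Real.sqrt Y0 + σ / 2 * (2 * (k : ℝ) - (n : ℝ)) * Real.sqrt h then
    (Real.sqrt Y0 + σ / 2 * (2 * (k : ℝ) - (n : ℝ)) * Real.sqrt h) ^ 2
  else 0

open Classical in
/-- The 'up' jump index `k_u(n,k)`, with default `n+1` when the set is empty. -/
def kuF (κ θ σ Y0 h : ℝ) (n k : ℕ) : ℕ :=
  if ∃ k' : ℕ, k + 1 ≤ k' ∧ k' ≤ n + 1 ∧
      ynode σ Y0 h n k + κ * (θ - ynode σ Y0 h n k) * h ≤ ynode σ Y0 h (n + 1) k' then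
    sInf {k' : ℕ | k + 1 ≤ k' ∧ k' ≤ n + 1 ∧
      ynode σ Y0 h n k + κ * (θ - ynode σ Y0 h n k) * h ≤ ynode σ Y0 h (n + 1) k'}
  else n + 1

open Classical in
/-- The 'down' jump index `k_d(n,k)`, with default `0` when the set is empty. -/
def kdF (κ θ σ Y0 h : ℝ) (n k : ℕ) : ℕ :=
  if ∃ k' : ℕ, k' ≤ k ∧
      ynode σ Y0 h (n + 1) k' ≤ ynode σ Y0 h n k + κ * (θ - ynode σ Y0 h n k) * h then
    sSup {k' : ℕ | k' ≤ k ∧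
      ynode σ Y0 h (n + 1) k' ≤ ynode σ Y0 h n k + κ * (θ - ynode σ Y0 h n k) * h}
  else 0

/-- The 'up' transition probability
`p_u(n,k) = 0 ∨ ((μ_Y(y^n_k)h + y^n_k - y^{n+1}_{k_d})/(y^{n+1}_{k_u} - y^{n+1}_{k_d})) ∧ 1`. -/
def puF (κ θ σ Y0 h : ℝ) (n k : ℕ) : ℝ :=
  max 0 (min 1 ((κ * (θ - ynode σ Y0 h n k) * h + ynode σ Y0 h n k
      - ynode σ Y0 h (n + 1) (kdF κ θ σ Y0 h n k)) /
    (ynode σ Y0 h (n + 1) (kuF κ θ σ Y0 h n k)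
      - ynode σ Y0 h (n + 1) (kdF κ θ σ Y0 h n k))))

/-- The 'down' transition probability `p_d(n,k) = 1 - p_u(n,k)`. -/
def pdF (κ θ σ Y0 h : ℝ) (n k : ℕ) : ℝ := 1 - puF κ θ σ Y0 h n k

/-- `(Y_n)_{0 ≤ n ≤ N}` is a Markov chain on the CIR tree with time step `h`:
it starts at `Y₀`, lives on the lattice, and for every bounded measurable `g`, on the
event `{Y_n = y^n_k}` one has
`E[g(Y_{n+1}) | Y_0,…,Y_n] = p_u(n,k) g(y^{n+1}_{k_u}) + p_d(n,k) g(y^{n+1}_{k_d})` a.s. -/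
def IsCIRTreeChain (κ θ σ Y0 h : ℝ) (N : ℕ) {Ω : Type*} [MeasurableSpace Ω]
    (P : Measure Ω) (Y : ℕ → Ω → ℝ) : Prop :=
  (∀ n, Measurable (Y n)) ∧
  (∀ ω, Y 0 ω = Y0) ∧
  (∀ n ≤ N, ∀ ω, ∃ k ≤ n, Y n ω = ynode σ Y0 h n k) ∧
  ∀ n < N, ∀ k ≤ n, ∀ g : ℝ → ℝ, Measurable g → (∃ M, ∀ x, |g x| ≤ M) →
    ∀ᵐ ω ∂P, Y n ω = ynode σ Y0 h n k →
      (P[(fun ω' => g (Y (n + 1) ω')) |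
          MeasurableSpace.comap (fun ω' => fun i : Fin (n + 1) => Y i ω') inferInstance]) ω =
        puF κ θ σ Y0 h n k * g (ynode σ Y0 h (n + 1) (kuF κ θ σ Y0 h n k)) +
        pdF κ θ σ Y0 h n k * g (ynode σ Y0 h (n + 1) (kdF κ θ σ Y0 h n k))

namespace CIRAux

lemma clamp_add_le (t c : ℝ) (hc : 0 ≤ c) : max (t + c) 0 ≤ max t 0 + c := by
  rcases le_total (t + c) 0 with h | h
  · rw [max_eq_right h]; positivity
  · rw [max_eq_left h]
    have := le_max_left t 0
    linarith

lemma clamp_sq_diff (t c : ℝ) (hc : 0 ≤ c) :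
    (max t 0) ^ 2 - (max (t - c) 0) ^ 2 ≤ 2 * c * max t 0 := by
  have h1 : max t 0 - c ≤ max (t - c) 0 := by
    rcases le_total t c with h | h
    · have h1 : max t 0 ≤ c := max_le h hc
      have := le_max_right (t - c) (0:ℝ)
      linarith
    · rw [max_eq_left (by linarith : (0:ℝ) ≤ t - c)]
      have : max t 0 ≤ t := max_le le_rfl (hc.trans h)
      linarith
  have h2 : (0:ℝ) ≤ max (t - c) 0 := le_max_right _ _
  have h3 : max (t - c) 0 ≤ max t 0 := max_le_max (by linarith) le_rfl
  nlinarith [le_max_right t 0]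

/-- abbreviation for the lattice argument -/
def arg (σ Y0 h : ℝ) (n k : ℕ) : ℝ :=
  Real.sqrt Y0 + σ / 2 * (2 * (k : ℝ) - (n : ℝ)) * Real.sqrt h

lemma ynode_eq (σ Y0 h : ℝ) (n k : ℕ) :
    ynode σ Y0 h n k = (max (arg σ Y0 h n k) 0) ^ 2 := by
  unfold ynode arg
  split_ifs with hpos
  · rw [max_eq_left hpos.le]
  · rw [max_eq_right (not_lt.1 hpos)]; ring

lemma ynode_nonneg (σ Y0 h : ℝ) (n k : ℕ) : 0 ≤ ynode σ Y0 h n k := by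
  rw [ynode_eq]; positivity

lemma sqrt_ynode (σ Y0 h : ℝ) (n k : ℕ) :
    Real.sqrt (ynode σ Y0 h n k) = max (arg σ Y0 h n k) 0 := by
  rw [ynode_eq, Real.sqrt_sq (le_max_right _ _)]

lemma arg_succ_k (σ Y0 h : ℝ) (n k : ℕ) :
    arg σ Y0 h n (k + 1) = arg σ Y0 h n k + σ * Real.sqrt h := by
  unfold arg; push_cast; ring

lemma arg_succ_n (σ Y0 h : ℝ) (n k : ℕ) :
    arg σ Y0 h (n + 1) k = arg σ Y0 h n k - σ / 2 * Real.sqrt h := by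
  unfold arg; push_cast; ring

lemma arg_mono (σ Y0 h : ℝ) (hσ : 0 ≤ σ) {n k k' : ℕ} (hk : k ≤ k') :
    arg σ Y0 h n k ≤ arg σ Y0 h n k' := by
  unfold arg
  have : (k:ℝ) ≤ (k':ℝ) := by exact_mod_cast hk
  have h2 : (0:ℝ) ≤ σ / 2 * Real.sqrt h := by positivity
  nlinarith [Real.sqrt_nonneg h]

lemma ynode_mono (σ Y0 h : ℝ) (hσ : 0 ≤ σ) {n k k' : ℕ} (hk : k ≤ k') :
    ynode σ Y0 h n k ≤ ynode σ Y0 h n k' := by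
  rw [ynode_eq, ynode_eq]
  have := arg_mono σ Y0 h hσ (n := n) hk
  have h1 : max (arg σ Y0 h n k) 0 ≤ max (arg σ Y0 h n k') 0 := max_le_max this le_rfl
  exact pow_le_pow_left₀ (le_max_right _ _) h1 2

lemma ynode_level_le (σ Y0 h : ℝ) (hσ : 0 ≤ σ) (n k : ℕ) :
    ynode σ Y0 h (n + 1) k ≤ ynode σ Y0 h n k := by
  rw [ynode_eq, ynode_eq]
  have h1 : arg σ Y0 h (n+1) k ≤ arg σ Y0 h n k := by
    rw [arg_succ_n]; nlinarith [Real.sqrt_nonneg h]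
  exact pow_le_pow_left₀ (le_max_right _ _) (max_le_max h1 le_rfl) 2

lemma ynode_up_le (σ Y0 h : ℝ) (hσ : 0 ≤ σ) (n k : ℕ) :
    ynode σ Y0 h (n + 1) (k + 1) ≤ (Real.sqrt (ynode σ Y0 h n k) + σ / 2 * Real.sqrt h) ^ 2 := by
  rw [ynode_eq, sqrt_ynode]
  have harg : arg σ Y0 h (n+1) (k+1) = arg σ Y0 h n k + σ / 2 * Real.sqrt h := by
    rw [arg_succ_k, arg_succ_n]; ring
  have hc : (0:ℝ) ≤ σ / 2 * Real.sqrt h := by positivity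
  have h1 : max (arg σ Y0 h (n+1) (k+1)) 0 ≤ max (arg σ Y0 h n k) 0 + σ / 2 * Real.sqrt h := by
    rw [harg]; exact clamp_add_le _ _ hc
  have h2 : (0:ℝ) ≤ max (arg σ Y0 h n k) 0 + σ / 2 * Real.sqrt h := by positivity
  exact pow_le_pow_left₀ (le_max_right _ _) h1 2

lemma ynode_step_diff (σ Y0 h : ℝ) (hσ : 0 ≤ σ) (n k : ℕ) :
    ynode σ Y0 h n (k + 1) - ynode σ Y0 h n k
      ≤ 2 * (σ * Real.sqrt h) * Real.sqrt (ynode σ Y0 h n (k + 1)) := by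
  rw [sqrt_ynode, ynode_eq, ynode_eq]
  have harg : arg σ Y0 h n k = arg σ Y0 h n (k+1) - σ * Real.sqrt h := by
    rw [arg_succ_k]; ring
  rw [harg]
  exact clamp_sq_diff _ _ (by positivity)

lemma ynode_down_diff (σ Y0 h : ℝ) (hσ : 0 ≤ σ) (n k : ℕ) :
    ynode σ Y0 h n k - ynode σ Y0 h (n + 1) k
      ≤ σ * Real.sqrt h * Real.sqrt (ynode σ Y0 h n k) := by
  rw [sqrt_ynode, ynode_eq, ynode_eq]
  have harg : arg σ Y0 h (n+1) k = arg σ Y0 h n k - σ / 2 * Real.sqrt h := arg_succ_n _ _ _ _ _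
  rw [harg]
  have := clamp_sq_diff (arg σ Y0 h n k) (σ / 2 * Real.sqrt h) (by positivity)
  nlinarith [this]

end CIRAux
namespace CIRAux

section Nodes

variable (κ θ σ Y0 h : ℝ) (n k : ℕ)

lemma kd_le_k : kdF κ θ σ Y0 h n k ≤ k := by
  unfold kdF
  split_ifs with hne
  · have hb : BddAbove {k' : ℕ | k' ≤ k ∧
        ynode σ Y0 h (n + 1) k' ≤ ynode σ Y0 h n k + κ * (θ - ynode σ Y0 h n k) * h} :=
      ⟨k, fun j hj => hj.1⟩
    exact (Nat.sSup_mem hne hb).1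
  · exact Nat.zero_le k

lemma ku_ge : k + 1 ≤ kuF κ θ σ Y0 h n k ∨ kuF κ θ σ Y0 h n k = n + 1 := by
  unfold kuF
  split_ifs with hne
  · exact Or.inl (Nat.sInf_mem hne).1
  · exact Or.inr rfl

lemma ku_ge' (hk : k ≤ n) : k + 1 ≤ kuF κ θ σ Y0 h n k := by
  rcases ku_ge κ θ σ Y0 h n k with h1 | h1
  · exact h1
  · omega

lemma ku_le : kuF κ θ σ Y0 h n k ≤ n + 1 := by
  unfold kuF
  split_ifs with hne
  · exact (Nat.sInf_mem hne).2.1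
  · exact le_rfl

lemma yd_le_y (hσ : 0 ≤ σ) :
    ynode σ Y0 h (n + 1) (kdF κ θ σ Y0 h n k) ≤ ynode σ Y0 h n k :=
  le_trans (ynode_mono σ Y0 h hσ (kd_le_k κ θ σ Y0 h n k)) (ynode_level_le σ Y0 h hσ n k)

lemma y_le_yu (hσ : 0 ≤ σ) (hk : k ≤ n) :
    ynode σ Y0 h n k ≤ ynode σ Y0 h (n + 1) (kuF κ θ σ Y0 h n k) := by
  refine le_trans ?_ (ynode_mono σ Y0 h hσ (ku_ge' κ θ σ Y0 h n k hk))
  rw [ynode_eq, ynode_eq]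
  have harg : arg σ Y0 h n k ≤ arg σ Y0 h (n+1) (k+1) := by
    rw [arg_succ_k, arg_succ_n]
    nlinarith [Real.sqrt_nonneg h]
  exact pow_le_pow_left₀ (le_max_right _ _) (max_le_max harg le_rfl) 2

lemma pu_nonneg : 0 ≤ puF κ θ σ Y0 h n k := le_max_left _ _

lemma pu_le_one : puF κ θ σ Y0 h n k ≤ 1 := max_le zero_le_one (min_le_left _ _)

lemma mean_le (hκ : 0 ≤ κ) (hθ : 0 ≤ θ) (hh : 0 ≤ h) (hσ : 0 ≤ σ) (hk : k ≤ n) :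
    puF κ θ σ Y0 h n k * ynode σ Y0 h (n + 1) (kuF κ θ σ Y0 h n k)
      + pdF κ θ σ Y0 h n k * ynode σ Y0 h (n + 1) (kdF κ θ σ Y0 h n k)
      ≤ ynode σ Y0 h n k + κ * θ * h := by
  set y := ynode σ Y0 h n k with hy
  set yu := ynode σ Y0 h (n + 1) (kuF κ θ σ Y0 h n k) with hyu
  set yd := ynode σ Y0 h (n + 1) (kdF κ θ σ Y0 h n k) with hyd
  set pu := puF κ θ σ Y0 h n k with hpu
  have hdy : yd ≤ y := yd_le_y κ θ σ Y0 h n k hσ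
  have huy : y ≤ yu := y_le_yu κ θ σ Y0 h n k hσ hk
  have hp0 : 0 ≤ pu := pu_nonneg κ θ σ Y0 h n k
  have hp1 : pu ≤ 1 := pu_le_one κ θ σ Y0 h n k
  have hynn : 0 ≤ y := ynode_nonneg σ Y0 h n k
  have hmt : y + κ * (θ - y) * h ≤ y + κ * θ * h := by nlinarith [mul_nonneg (mul_nonneg hκ hynn) hh]
  have key : pu * (yu - yd) ≤ max 0 (y + κ * (θ - y) * h - yd) := by
    rcases eq_or_lt_of_le (hdy.trans huy) with heq | hlt
    · rw [← heq]; simpa using le_max_left _ _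
    · set r := (κ * (θ - y) * h + y - yd) / (yu - yd) with hr
      have hpu_eq : pu = max 0 (min 1 r) := by rw [hpu, puF]
      rcases le_or_gt r 0 with hr0 | hr0
      · have : pu = 0 := by
          rw [hpu_eq, max_eq_left]
          exact le_trans (min_le_right _ _) hr0
        rw [this, zero_mul]
        exact le_max_left _ _
      · have hΔ : 0 < yu - yd := sub_pos.2 hlt
        have h1 : pu ≤ r := by
          rw [hpu_eq]
          exact max_le hr0.le (min_le_right _ _)
        have h2 : pu * (yu - yd) ≤ r * (yu - yd) :=
          mul_le_mul_of_nonneg_right h1 hΔ.le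
        have h3 : r * (yu - yd) = κ * (θ - y) * h + y - yd := by
          rw [hr]; field_simp
        refine le_trans h2 (le_trans (le_of_eq h3) ?_)
        refine le_max_of_le_right (by ring_nf; exact le_rfl)
    
  have hrw : pu * yu + pdF κ θ σ Y0 h n k * yd = yd + pu * (yu - yd) := by
    rw [pdF, ← hpu]; ring
  rw [hrw]
  have : yd + max 0 (y + κ * (θ - y) * h - yd) ≤ y + κ * θ * h := by
    rcases le_total (y + κ * (θ - y) * h - yd) 0 with hc | hc
    · rw [max_eq_left hc]; nlinarith [mul_nonneg (mul_nonneg hκ hθ) hh]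
    · rw [max_eq_right hc]; linarith
  linarith [key]

end Nodes

end CIRAux
namespace CIRAux

section NodeBounds

variable (κ θ σ Y0 h : ℝ) (n k : ℕ)

lemma yu_ub (hκ : 0 ≤ κ) (hθ : 0 ≤ θ) (hσ : 0 ≤ σ) (hh : 0 ≤ h) (hk : k ≤ n) :
    ynode σ Y0 h (n + 1) (kuF κ θ σ Y0 h n k)
      ≤ (Real.sqrt (ynode σ Y0 h n k + κ * θ * h) + σ * Real.sqrt h) ^ 2 := by
  set y := ynode σ Y0 h n k with hy
  have hynn : 0 ≤ y := ynode_nonneg σ Y0 h n k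
  have hκθh : 0 ≤ κ * θ * h := by positivity
  have hmt : y + κ * (θ - y) * h ≤ y + κ * θ * h := by
    nlinarith [mul_nonneg (mul_nonneg hκ hynn) hh]
  have hsnn : 0 ≤ Real.sqrt (y + κ * θ * h) + σ * Real.sqrt h := by positivity
  unfold kuF
  split_ifs with hne
  · set S := {k' : ℕ | k + 1 ≤ k' ∧ k' ≤ n + 1 ∧
      ynode σ Y0 h n k + κ * (θ - ynode σ Y0 h n k) * h ≤ ynode σ Y0 h (n + 1) k'} with hS
    have hmem : sInf S ∈ S := Nat.sInf_mem hne
    obtain ⟨h1, h2, h3⟩ := hmem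
    rcases eq_or_lt_of_le h1 with heq | hlt
    · -- sInf S = k + 1
      rw [← heq]
      refine le_trans (ynode_up_le σ Y0 h hσ n k) ?_
      have hs1 : Real.sqrt y ≤ Real.sqrt (y + κ * θ * h) :=
        Real.sqrt_le_sqrt (by linarith)
      have hs2 : σ / 2 * Real.sqrt h ≤ σ * Real.sqrt h := by
        nlinarith [Real.sqrt_nonneg h]
      have hnn : 0 ≤ Real.sqrt y + σ / 2 * Real.sqrt h := by positivity
      exact pow_le_pow_left₀ hnn (by linarith) 2
    · -- k + 1 < sInf S
      obtain ⟨j, hj⟩ : ∃ j, sInf S = j + 1 := ⟨sInf S - 1, by omega⟩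
      have hjn : j ∉ S := Nat.notMem_of_lt_sInf (by omega)
      have hjc : ¬ (ynode σ Y0 h n k + κ * (θ - ynode σ Y0 h n k) * h
          ≤ ynode σ Y0 h (n + 1) j) := by
        intro hcon
        exact hjn ⟨by omega, by omega, hcon⟩
      push_neg at hjc
      rw [hj]
      have hstep : Real.sqrt (ynode σ Y0 h (n + 1) (j + 1))
          ≤ Real.sqrt (ynode σ Y0 h (n + 1) j) + σ * Real.sqrt h := by
        rw [sqrt_ynode, sqrt_ynode, arg_succ_k]
        exact clamp_add_le _ _ (by positivity)
      have hs3 : Real.sqrt (ynode σ Y0 h (n + 1) j) ≤ Real.sqrt (y + κ * θ * h) :=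
        Real.sqrt_le_sqrt (by rw [hy]; linarith)
      have : Real.sqrt (ynode σ Y0 h (n + 1) (j + 1))
          ≤ Real.sqrt (y + κ * θ * h) + σ * Real.sqrt h := by linarith
      calc ynode σ Y0 h (n + 1) (j + 1)
          = Real.sqrt (ynode σ Y0 h (n + 1) (j + 1)) ^ 2 := by
            rw [Real.sq_sqrt (ynode_nonneg _ _ _ _ _)]
        _ ≤ (Real.sqrt (y + κ * θ * h) + σ * Real.sqrt h) ^ 2 :=
            pow_le_pow_left₀ (Real.sqrt_nonneg _) this 2
  · -- empty case : top node below the mean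
    push_neg at hne
    have htop := hne (n + 1)
    have h4 : ynode σ Y0 h (n + 1) (n + 1) < ynode σ Y0 h n k
        + κ * (θ - ynode σ Y0 h n k) * h := htop (by omega) le_rfl
    have h5 : ynode σ Y0 h (n + 1) (n + 1) ≤ y + κ * θ * h := by
      rw [hy]; linarith
    have h6 : y + κ * θ * h = Real.sqrt (y + κ * θ * h) ^ 2 := by
      rw [Real.sq_sqrt (by linarith)]
    nlinarith [Real.sqrt_nonneg (y + κ * θ * h), mul_nonneg hσ (Real.sqrt_nonneg h)]

lemma yd_lb (hκ : 0 ≤ κ) (hθ : 0 ≤ θ) (hσ : 0 ≤ σ) (hh : 0 ≤ h) :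
    ynode σ Y0 h n k - ynode σ Y0 h (n + 1) (kdF κ θ σ Y0 h n k)
      ≤ κ * ynode σ Y0 h n k * h + 2 * σ * Real.sqrt h * Real.sqrt (ynode σ Y0 h n k) := by
  set y := ynode σ Y0 h n k with hy
  have hynn : 0 ≤ y := ynode_nonneg σ Y0 h n k
  have hκyh : 0 ≤ κ * y * h := by positivity
  have hκθh : 0 ≤ κ * θ * h := by positivity
  unfold kdF
  split_ifs with hne
  · set S := {k' : ℕ | k' ≤ k ∧
      ynode σ Y0 h (n + 1) k' ≤ ynode σ Y0 h n k + κ * (θ - ynode σ Y0 h n k) * h} with hS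
    have hb : BddAbove S := ⟨k, fun j hj => hj.1⟩
    have hmem : sSup S ∈ S := Nat.sSup_mem hne hb
    obtain ⟨h1, h2⟩ := hmem
    rcases eq_or_lt_of_le h1 with heq | hlt
    · -- sSup S = k
      rw [heq]
      have := ynode_down_diff σ Y0 h hσ n k
      rw [← hy] at this
      nlinarith [Real.sqrt_nonneg h, Real.sqrt_nonneg y,
        mul_nonneg (mul_nonneg hσ (Real.sqrt_nonneg h)) (Real.sqrt_nonneg y)]
    · -- sSup S < k
      have hnotmem : sSup S + 1 ∉ S := fun hmem' => by
        have := le_csSup hb hmem'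
        omega
      have h3 : ynode σ Y0 h n k + κ * (θ - ynode σ Y0 h n k) * h
          < ynode σ Y0 h (n + 1) (sSup S + 1) := by
        by_contra hcon
        push_neg at hcon
        exact hnotmem ⟨by omega, hcon⟩
      have hstep := ynode_step_diff σ Y0 h hσ (n + 1) (sSup S)
      have hmono : ynode σ Y0 h (n + 1) (sSup S + 1) ≤ y := by
        rw [hy]
        exact le_trans (ynode_mono σ Y0 h hσ (by omega)) (ynode_level_le σ Y0 h hσ n k)
      have hsq : Real.sqrt (ynode σ Y0 h (n + 1) (sSup S + 1)) ≤ Real.sqrt y :=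
        Real.sqrt_le_sqrt hmono
      have hsnn : 0 ≤ Real.sqrt (ynode σ Y0 h (n + 1) (sSup S + 1)) := Real.sqrt_nonneg _
      have hσh : 0 ≤ σ * Real.sqrt h := by positivity
      nlinarith [mul_le_mul_of_nonneg_left hsq (by positivity : (0:ℝ) ≤ 2 * (σ * Real.sqrt h))]
  · -- empty case
    push_neg at hne
    have h0 := hne 0
    have h3 : ynode σ Y0 h n k + κ * (θ - ynode σ Y0 h n k) * h
        < ynode σ Y0 h (n + 1) 0 := h0 (Nat.zero_le k)
    have : 0 ≤ 2 * σ * Real.sqrt h * Real.sqrt y := by positivity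
    nlinarith [ynode_nonneg σ Y0 h (n+1) 0]

end NodeBounds

end CIRAux
namespace CIRAux

lemma pow_le_one_add (y : ℝ) (hy : 0 ≤ y) {a b : ℕ} (hab : a ≤ b) : y ^ a ≤ 1 + y ^ b := by
  rcases le_total y 1 with h | h
  · have h1 : y ^ a ≤ 1 := pow_le_one₀ hy h
    have h2 : (0:ℝ) ≤ y ^ b := by positivity
    linarith
  · have h1 : y ^ a ≤ y ^ b := pow_le_pow_right₀ h hab
    linarith

lemma weight_bound (m j : ℕ) (hj : j ≤ m) (s : ℝ) (hs : 0 ≤ s) :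
    s ^ (2 * (m - j)) * (1 + s) ^ j ≤ 2 ^ j * (1 + s ^ (2 * m)) := by
  set t := max 1 s with hts
  have ht1 : 1 ≤ t := le_max_left _ _
  have hst : s ≤ t := le_max_right _ _
  have ht0 : (0:ℝ) ≤ t := by linarith
  have h1 : s ^ (2 * (m - j)) ≤ t ^ (2 * (m - j)) := pow_le_pow_left₀ hs hst _
  have h2 : (1 + s) ^ j ≤ (2 * t) ^ j := pow_le_pow_left₀ (by linarith) (by linarith) j
  have h3 : s ^ (2 * (m - j)) * (1 + s) ^ j ≤ t ^ (2 * (m - j)) * (2 * t) ^ j :=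
    mul_le_mul h1 h2 (by positivity) (by positivity)
  have h4 : t ^ (2 * (m - j)) * (2 * t) ^ j = 2 ^ j * t ^ (2 * (m - j) + j) := by
    rw [mul_pow, pow_add]; ring
  have h5 : t ^ (2 * (m - j) + j) ≤ t ^ (2 * m) := pow_le_pow_right₀ ht1 (by omega)
  have h6 : t ^ (2 * m) ≤ 1 + s ^ (2 * m) := by
    rcases le_total s 1 with hc | hc
    · rw [hts, max_eq_left hc, one_pow]
      have : (0:ℝ) ≤ s ^ (2 * m) := by positivity
      linarith
    · rw [hts, max_eq_right hc]
      linarith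
  calc s ^ (2 * (m - j)) * (1 + s) ^ j ≤ 2 ^ j * t ^ (2 * (m - j) + j) := by rw [← h4]; exact h3
    _ ≤ 2 ^ j * t ^ (2 * m) := by
        have : (0:ℝ) ≤ (2:ℝ) ^ j := by positivity
        nlinarith
    _ ≤ 2 ^ j * (1 + s ^ (2 * m)) := by
        have : (0:ℝ) ≤ (2:ℝ) ^ j := by positivity
        nlinarith

lemma step_poly (M : ℕ) (κθ D h y δu δd pu : ℝ)
    (hh : 0 ≤ h) (hh1 : h ≤ 1) (hy : 0 ≤ y) (hκθ : 0 ≤ κθ) (hD : 0 ≤ D)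
    (hδu0 : 0 ≤ δu) (hδd0 : 0 ≤ δd)
    (hδu : δu ≤ D * Real.sqrt h * (1 + Real.sqrt y))
    (hδd : δd ≤ D * Real.sqrt h * (1 + Real.sqrt y))
    (hpu : 0 ≤ pu) (hpu1 : pu ≤ 1)
    (hmean : pu * δu - (1 - pu) * δd ≤ κθ * h) :
    pu * (y + δu) ^ (M + 2) + (1 - pu) * (y - δd) ^ (M + 2)
      ≤ y ^ (M + 2) + (((M : ℝ) + 2) * κθ + (1 + 2 * D) ^ (M + 2)) * h * (1 + y ^ (M + 2)) := by
  set m := M + 2 with hm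
  set G : ℕ → ℝ := fun j =>
    (pu * δu ^ j + (1 - pu) * (-δd) ^ j) * y ^ (m - j) * (Nat.choose m j : ℝ) with hG
  have expand : pu * (y + δu) ^ m + (1 - pu) * (y - δd) ^ m
      = ∑ j ∈ Finset.range (m + 1), G j := by
    rw [show y + δu = δu + y by ring, show y - δd = -δd + y by ring, add_pow, add_pow,
      Finset.mul_sum, Finset.mul_sum, ← Finset.sum_add_distrib]
    exact Finset.sum_congr rfl fun j hj => by rw [hG]; ring
  rw [expand]
  -- peel off the first two terms
  have peel : ∀ f : ℕ → ℝ, ∑ j ∈ Finset.range (M + 3), f j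
      = (∑ i ∈ Finset.range (M + 1), f (i + 2)) + f 1 + f 0 := by
    intro f
    rw [Finset.sum_range_succ' f (M + 2), Finset.sum_range_succ' (fun i => f (i + 1)) (M + 1)]
  have hrange : m + 1 = M + 3 := by omega
  rw [hrange, peel]
  -- the three pieces
  have hG0 : G 0 = y ^ m := by
    simp [hG]
  have hymnn : (0:ℝ) ≤ y ^ (m - 1) := by positivity
  have hG1 : G 1 ≤ (m : ℝ) * κθ * h * (1 + y ^ m) := by
    have e1 : G 1 = (pu * δu - (1 - pu) * δd) * (y ^ (m - 1) * (m : ℝ)) := by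
      simp [hG]; ring
    have e2 : (pu * δu - (1 - pu) * δd) * (y ^ (m - 1) * (m : ℝ))
        ≤ (κθ * h) * (y ^ (m - 1) * (m : ℝ)) := by
      apply mul_le_mul_of_nonneg_right hmean
      positivity
    have e3 : y ^ (m - 1) ≤ 1 + y ^ m := pow_le_one_add y hy (by omega)
    have e4 : (κθ * h) * (y ^ (m - 1) * (m : ℝ)) ≤ (κθ * h) * ((1 + y ^ m) * (m : ℝ)) := by
      have h0 : (0:ℝ) ≤ κθ * h := by positivity
      have hm0 : (0:ℝ) ≤ (m:ℝ) := by positivity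
      exact mul_le_mul_of_nonneg_left (mul_le_mul_of_nonneg_right e3 hm0) h0
    rw [e1]
    calc (pu * δu - (1 - pu) * δd) * (y ^ (m - 1) * (m : ℝ))
        ≤ (κθ * h) * ((1 + y ^ m) * (m : ℝ)) := le_trans e2 e4
      _ = (m : ℝ) * κθ * h * (1 + y ^ m) := by ring
  have hΔnn : (0:ℝ) ≤ D * Real.sqrt h * (1 + Real.sqrt y) := by positivity
  have hGj : ∀ i ∈ Finset.range (M + 1),
      G (i + 2) ≤ ((Nat.choose m (i + 2) : ℝ) * (2 * D) ^ (i + 2)) * (h * (1 + y ^ m)) := by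
    intro i hi
    have hile : i + 2 ≤ m := by
      simp only [Finset.mem_range] at hi; omega
    set j := i + 2 with hj
    set Δ := D * Real.sqrt h * (1 + Real.sqrt y) with hΔ
    have hcoef : pu * δu ^ j + (1 - pu) * (-δd) ^ j ≤ Δ ^ j := by
      have h1 : δu ^ j ≤ Δ ^ j := pow_le_pow_left₀ hδu0 hδu j
      have h2 : (-δd) ^ j ≤ Δ ^ j := by
        calc (-δd) ^ j ≤ |(-δd) ^ j| := le_abs_self _
          _ = δd ^ j := by rw [abs_pow, abs_neg, abs_of_nonneg hδd0]
          _ ≤ Δ ^ j := pow_le_pow_left₀ hδd0 hδd j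
      nlinarith
    have hΔj : Δ ^ j ≤ D ^ j * h * (1 + Real.sqrt y) ^ j := by
      have e1 : Δ ^ j = D ^ j * Real.sqrt h ^ j * (1 + Real.sqrt y) ^ j := by
        rw [hΔ, mul_pow, mul_pow]
      have hsh1 : Real.sqrt h ≤ 1 := by
        rw [show (1:ℝ) = Real.sqrt 1 by simp]
        exact Real.sqrt_le_sqrt hh1
      have e2 : Real.sqrt h ^ j ≤ h := by
        have : Real.sqrt h ^ j = h * Real.sqrt h ^ i := by
          rw [hj, pow_add, Real.sq_sqrt hh]; ring
        rw [this]
        have h3 : Real.sqrt h ^ i ≤ 1 := pow_le_one₀ (Real.sqrt_nonneg h) hsh1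
        nlinarith
      rw [e1]
      have h4 : (0:ℝ) ≤ (1 + Real.sqrt y) ^ j := by positivity
      have h5 : (0:ℝ) ≤ D ^ j := by positivity
      exact mul_le_mul_of_nonneg_right (mul_le_mul_of_nonneg_left e2 h5) h4
    have hyw : y ^ (m - j) * (1 + Real.sqrt y) ^ j ≤ 2 ^ j * (1 + y ^ m) := by
      have := weight_bound m j hile (Real.sqrt y) (Real.sqrt_nonneg y)
      have e3 : Real.sqrt y ^ (2 * (m - j)) = y ^ (m - j) := by
        rw [pow_mul, Real.sq_sqrt hy]
      have e4 : Real.sqrt y ^ (2 * m) = y ^ m := by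
        rw [pow_mul, Real.sq_sqrt hy]
      rw [e3, e4] at this
      exact this
    -- combine
    have hcnn : (0:ℝ) ≤ (Nat.choose m j : ℝ) := by positivity
    have hynn : (0:ℝ) ≤ y ^ (m - j) := by positivity
    have step1 : G j ≤ Δ ^ j * y ^ (m - j) * (Nat.choose m j : ℝ) := by
      rw [hG]
      apply mul_le_mul_of_nonneg_right _ hcnn
      exact mul_le_mul_of_nonneg_right hcoef hynn
    have step2 : Δ ^ j * y ^ (m - j) ≤ D ^ j * h * ((1 + Real.sqrt y) ^ j * y ^ (m - j)) := by
      have h6 : (0:ℝ) ≤ Δ ^ j := by positivity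
      calc Δ ^ j * y ^ (m - j) ≤ (D ^ j * h * (1 + Real.sqrt y) ^ j) * y ^ (m - j) :=
            mul_le_mul_of_nonneg_right hΔj hynn
        _ = D ^ j * h * ((1 + Real.sqrt y) ^ j * y ^ (m - j)) := by ring
    have step3 : (1 + Real.sqrt y) ^ j * y ^ (m - j) ≤ 2 ^ j * (1 + y ^ m) := by
      rw [mul_comm]; exact hyw
    have hDh : (0:ℝ) ≤ D ^ j * h := by positivity
    calc G j ≤ Δ ^ j * y ^ (m - j) * (Nat.choose m j : ℝ) := step1
      _ ≤ (D ^ j * h * (2 ^ j * (1 + y ^ m))) * (Nat.choose m j : ℝ) := by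
          apply mul_le_mul_of_nonneg_right _ hcnn
          refine le_trans step2 ?_
          exact mul_le_mul_of_nonneg_left step3 hDh
      _ = ((Nat.choose m j : ℝ) * (2 * D) ^ j) * (h * (1 + y ^ m)) := by
          rw [mul_pow]; ring
  -- sum the tail bound
  have hsum : ∑ i ∈ Finset.range (M + 1), G (i + 2)
      ≤ (∑ i ∈ Finset.range (M + 1), (Nat.choose m (i + 2) : ℝ) * (2 * D) ^ (i + 2))
          * (h * (1 + y ^ m)) := by
    rw [Finset.sum_mul]
    exact Finset.sum_le_sum hGj
  have hbinom : (∑ i ∈ Finset.range (M + 1), (Nat.choose m (i + 2) : ℝ) * (2 * D) ^ (i + 2))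
      ≤ (1 + 2 * D) ^ m := by
    have hfull : (1 + 2 * D) ^ m
        = ∑ j ∈ Finset.range (m + 1), (2 * D) ^ j * (Nat.choose m j : ℝ) := by
      rw [show (1 : ℝ) + 2 * D = 2 * D + 1 by ring, add_pow]
      exact Finset.sum_congr rfl fun j hj => by rw [one_pow, mul_one]
    have hW : ∀ j : ℕ, (0:ℝ) ≤ (2 * D) ^ j * (Nat.choose m j : ℝ) := by
      intro j; positivity
    rw [hfull, hrange, peel (fun j => (2 * D) ^ j * (Nat.choose m j : ℝ))]
    have h7 := hW 0
    have h8 := hW 1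
    have h9 : (∑ i ∈ Finset.range (M + 1), (Nat.choose m (i + 2) : ℝ) * (2 * D) ^ (i + 2))
        = ∑ i ∈ Finset.range (M + 1), (2 * D) ^ (i + 2) * (Nat.choose m (i + 2) : ℝ) := by
      exact Finset.sum_congr rfl fun i hi => by ring
    rw [h9]
    linarith
  have hmono : (∑ i ∈ Finset.range (M + 1), (Nat.choose m (i + 2) : ℝ) * (2 * D) ^ (i + 2))
      * (h * (1 + y ^ m)) ≤ (1 + 2 * D) ^ m * (h * (1 + y ^ m)) := by
    apply mul_le_mul_of_nonneg_right hbinom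
    positivity
  have hmcast : ((m : ℕ) : ℝ) = (M : ℝ) + 2 := by rw [hm]; push_cast; ring
  have hfin : (0:ℝ) ≤ 1 + y ^ m := by positivity
  calc (∑ i ∈ Finset.range (M + 1), G (i + 2)) + G 1 + G 0
      ≤ (1 + 2 * D) ^ m * (h * (1 + y ^ m)) + (m : ℝ) * κθ * h * (1 + y ^ m) + y ^ m := by
        have := le_trans hsum hmono
        linarith [hG1, le_of_eq hG0]
    _ = y ^ m + ((m : ℝ) * κθ + (1 + 2 * D) ^ m) * h * (1 + y ^ m) := by ring
    _ = y ^ (M + 2) + (((M : ℝ) + 2) * κθ + (1 + 2 * D) ^ (M + 2)) * h * (1 + y ^ (M + 2)) := by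
        rw [hmcast]
  
end CIRAux
namespace CIRAux

lemma sqrt_add_le (x y : ℝ) (hx : 0 ≤ x) (hy : 0 ≤ y) :
    Real.sqrt (x + y) ≤ Real.sqrt x + Real.sqrt y := by
  have h2 : x + y ≤ (Real.sqrt x + Real.sqrt y) ^ 2 := by
    nlinarith [Real.sq_sqrt hx, Real.sq_sqrt hy,
      mul_nonneg (Real.sqrt_nonneg x) (Real.sqrt_nonneg y)]
  calc Real.sqrt (x + y) ≤ Real.sqrt ((Real.sqrt x + Real.sqrt y) ^ 2) := Real.sqrt_le_sqrt h2
    _ = Real.sqrt x + Real.sqrt y := Real.sqrt_sq (by positivity)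

/-- The constant `B` bounding `√(y h)` over the tree. -/
def Bc (σ Y0 T : ℝ) : ℝ := Real.sqrt Y0 + σ * T / 2

/-- The constant `D` in the increment bound `|ΔY| ≤ D √h (1 + √y)`. -/
def Dc (κ θ σ Y0 T : ℝ) : ℝ :=
  κ * θ + σ ^ 2 + 2 * σ * Real.sqrt (κ * θ) + 2 * σ + κ * Bc σ Y0 T

section Combined

variable (κ θ σ Y0 T h : ℝ) (N n k : ℕ)

lemma Bc_nonneg (hσ : 0 ≤ σ) (hT : 0 ≤ T) : 0 ≤ Bc σ Y0 T := by
  unfold Bc; positivity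

lemma Dc_nonneg (hκ : 0 ≤ κ) (hθ : 0 ≤ θ) (hσ : 0 ≤ σ) (hT : 0 ≤ T) :
    0 ≤ Dc κ θ σ Y0 T := by
  have := Bc_nonneg σ Y0 T hσ hT
  unfold Dc; positivity

lemma yh_bound (hσ : 0 ≤ σ) (hh : 0 < h) (hh1 : h ≤ 1)
    (hTN : (N : ℝ) * h = T) (hk : k ≤ n) (hn : n ≤ N) :
    ynode σ Y0 h n k * h ≤ Bc σ Y0 T ^ 2 := by
  have hsh : (0:ℝ) ≤ Real.sqrt h := Real.sqrt_nonneg h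
  have hsh1 : Real.sqrt h ≤ 1 := by
    rw [show (1:ℝ) = Real.sqrt 1 by simp]
    exact Real.sqrt_le_sqrt hh1
  have hY0 : (0:ℝ) ≤ Real.sqrt Y0 := Real.sqrt_nonneg Y0
  have h1 : ynode σ Y0 h n k ≤ (Real.sqrt Y0 + σ / 2 * (N : ℝ) * Real.sqrt h) ^ 2 := by
    rw [ynode_eq]
    have harg : arg σ Y0 h n k ≤ Real.sqrt Y0 + σ / 2 * (N : ℝ) * Real.sqrt h := by
      unfold arg
      have hkn : (2 * (k:ℝ) - (n:ℝ)) ≤ (N : ℝ) := by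
        have h2 : (k:ℝ) ≤ (n:ℝ) := by exact_mod_cast hk
        have h3 : (n:ℝ) ≤ (N:ℝ) := by exact_mod_cast hn
        linarith
      nlinarith [mul_nonneg (mul_nonneg hσ hsh) (sub_nonneg.2 hkn)]
    have hnn : (0:ℝ) ≤ Real.sqrt Y0 + σ / 2 * (N : ℝ) * Real.sqrt h := by positivity
    exact pow_le_pow_left₀ (le_max_right _ _) (max_le harg hnn) 2
  have h2 : (Real.sqrt Y0 + σ / 2 * (N : ℝ) * Real.sqrt h) ^ 2 * h
      = (Real.sqrt Y0 * Real.sqrt h + σ / 2 * T) ^ 2 := by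
    have hh2 : Real.sqrt h ^ 2 = h := Real.sq_sqrt hh.le
    have : (Real.sqrt Y0 + σ / 2 * (N : ℝ) * Real.sqrt h) ^ 2 * h
        = ((Real.sqrt Y0 + σ / 2 * (N : ℝ) * Real.sqrt h) * Real.sqrt h) ^ 2 := by
      rw [mul_pow, hh2]
    rw [this]
    congr 1
    have hmul : Real.sqrt h * Real.sqrt h = h := Real.mul_self_sqrt hh.le
    have e5 : (Real.sqrt Y0 + σ / 2 * (N : ℝ) * Real.sqrt h) * Real.sqrt h
        = Real.sqrt Y0 * Real.sqrt h + σ / 2 * ((N:ℝ) * h) := by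
      linear_combination (σ / 2 * (N:ℝ)) * hmul
    rw [e5, hTN]
  have h3 : (Real.sqrt Y0 * Real.sqrt h + σ / 2 * T) ^ 2 ≤ Bc σ Y0 T ^ 2 := by
    have hT0 : (0:ℝ) ≤ T := by rw [← hTN]; positivity
    have e1 : Real.sqrt Y0 * Real.sqrt h + σ / 2 * T ≤ Bc σ Y0 T := by
      unfold Bc
      nlinarith
    exact pow_le_pow_left₀ (by positivity) e1 2
  calc ynode σ Y0 h n k * h ≤ (Real.sqrt Y0 + σ / 2 * (N : ℝ) * Real.sqrt h) ^ 2 * h :=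
        mul_le_mul_of_nonneg_right h1 hh.le
    _ = (Real.sqrt Y0 * Real.sqrt h + σ / 2 * T) ^ 2 := h2
    _ ≤ Bc σ Y0 T ^ 2 := h3

lemma delta_u_bound (hκ : 0 ≤ κ) (hθ : 0 ≤ θ) (hσ : 0 ≤ σ) (hh : 0 < h) (hh1 : h ≤ 1)
    (hk : k ≤ n) (hT : 0 ≤ T) :
    ynode σ Y0 h (n + 1) (kuF κ θ σ Y0 h n k) - ynode σ Y0 h n k
      ≤ Dc κ θ σ Y0 T * Real.sqrt h * (1 + Real.sqrt (ynode σ Y0 h n k)) := by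
  set y := ynode σ Y0 h n k with hy
  have hynn : 0 ≤ y := ynode_nonneg σ Y0 h n k
  have hsy : 0 ≤ Real.sqrt y := Real.sqrt_nonneg y
  have hsh : (0:ℝ) ≤ Real.sqrt h := Real.sqrt_nonneg h
  have hsh1 : Real.sqrt h ≤ 1 := by
    rw [show (1:ℝ) = Real.sqrt 1 by simp]
    exact Real.sqrt_le_sqrt hh1
  have hub := yu_ub κ θ σ Y0 h n k hκ hθ hσ hh.le hk
  have hs1 : Real.sqrt (y + κ * θ * h) ≤ Real.sqrt y + Real.sqrt (κ * θ) * Real.sqrt h := by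
    have := sqrt_add_le y (κ * θ * h) hynn (by positivity)
    have e : Real.sqrt (κ * θ * h) = Real.sqrt (κ * θ) * Real.sqrt h := Real.sqrt_mul (by positivity) h
    linarith [this, e.le, e.ge]
  have hsq : Real.sqrt (y + κ * θ * h) ^ 2 = y + κ * θ * h := Real.sq_sqrt (by positivity)
  have hhh : Real.sqrt h ^ 2 = h := Real.sq_sqrt hh.le
  have hBnn : 0 ≤ Bc σ Y0 T := Bc_nonneg σ Y0 T hσ hT
  have hskθ : 0 ≤ Real.sqrt (κ * θ) := Real.sqrt_nonneg _
  have hkθ1 : Real.sqrt (κ * θ) ^ 2 = κ * θ := Real.sq_sqrt (by positivity)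
  have expand : (Real.sqrt (y + κ * θ * h) + σ * Real.sqrt h) ^ 2
      = y + κ * θ * h + 2 * σ * Real.sqrt h * Real.sqrt (y + κ * θ * h) + σ ^ 2 * h := by
    rw [add_sq, hsq]
    rw [mul_pow, hhh]
    ring
  have hmain : (Real.sqrt (y + κ * θ * h) + σ * Real.sqrt h) ^ 2 - y
      ≤ Dc κ θ σ Y0 T * Real.sqrt h * (1 + Real.sqrt y) := by
    rw [expand]
    unfold Dc
    have hb1 : 2 * σ * Real.sqrt h * Real.sqrt (y + κ * θ * h)
        ≤ 2 * σ * Real.sqrt h * (Real.sqrt y + Real.sqrt (κ * θ) * Real.sqrt h) := by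
      apply mul_le_mul_of_nonneg_left hs1 (by positivity)
    have hhsh : h ≤ Real.sqrt h := by nlinarith [mul_nonneg hsh (sub_nonneg.2 hsh1)]
    have hκθh : κ * θ * h ≤ κ * θ * Real.sqrt h :=
      mul_le_mul_of_nonneg_left hhsh (by positivity)
    have hσ2 : σ ^ 2 * h ≤ σ ^ 2 * Real.sqrt h :=
      mul_le_mul_of_nonneg_left hhsh (by positivity)
    have hBnn' := Bc_nonneg σ Y0 T hσ hT
    nlinarith [mul_nonneg (mul_nonneg (mul_nonneg hκ hθ) hsh) hsy,
      mul_nonneg (mul_nonneg (sq_nonneg σ) hsh) hsy,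
      mul_nonneg (mul_nonneg (mul_nonneg hσ hskθ) hsh) (sub_nonneg.2 hsh1),
      mul_nonneg (mul_nonneg (mul_nonneg hσ hskθ) hsh) hsy,
      mul_nonneg hσ hsh,
      mul_nonneg (mul_nonneg hκ hBnn') hsh,
      mul_nonneg (mul_nonneg (mul_nonneg hκ hBnn') hsh) hsy,
      mul_nonneg (mul_nonneg hσ hsh) hsy]
  linarith [hub, hmain]

lemma delta_d_bound (hκ : 0 ≤ κ) (hθ : 0 ≤ θ) (hσ : 0 ≤ σ) (hh : 0 < h) (hh1 : h ≤ 1)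
    (hTN : (N : ℝ) * h = T) (hk : k ≤ n) (hn : n ≤ N) :
    ynode σ Y0 h n k - ynode σ Y0 h (n + 1) (kdF κ θ σ Y0 h n k)
      ≤ Dc κ θ σ Y0 T * Real.sqrt h * (1 + Real.sqrt (ynode σ Y0 h n k)) := by
  set y := ynode σ Y0 h n k with hy
  have hynn : 0 ≤ y := ynode_nonneg σ Y0 h n k
  have hsy : 0 ≤ Real.sqrt y := Real.sqrt_nonneg y
  have hsh : (0:ℝ) ≤ Real.sqrt h := Real.sqrt_nonneg h
  have hT : 0 ≤ T := by rw [← hTN]; positivity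
  have hBnn : 0 ≤ Bc σ Y0 T := Bc_nonneg σ Y0 T hσ hT
  have hlb := yd_lb κ θ σ Y0 h n k hκ hθ hσ hh.le
  have hyh : y * h ≤ Bc σ Y0 T ^ 2 := yh_bound σ Y0 T h N n k hσ hh hh1 hTN hk hn
  -- κ y h ≤ κ B √h √y
  have hsqyh : Real.sqrt y * Real.sqrt h ≤ Bc σ Y0 T := by
    have e1 : (Real.sqrt y * Real.sqrt h) ^ 2 = y * h := by
      rw [mul_pow, Real.sq_sqrt hynn, Real.sq_sqrt hh.le]
    nlinarith [mul_nonneg hsy hsh]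
  have hκyh : κ * y * h ≤ κ * Bc σ Y0 T * Real.sqrt h * Real.sqrt y := by
    have e2 : y * h = (Real.sqrt y * Real.sqrt h) * (Real.sqrt y * Real.sqrt h) := by
      have := Real.sq_sqrt hynn
      have := Real.sq_sqrt hh.le
      nlinarith
    have e3 : (Real.sqrt y * Real.sqrt h) * (Real.sqrt y * Real.sqrt h)
        ≤ Bc σ Y0 T * (Real.sqrt y * Real.sqrt h) := by
      apply mul_le_mul_of_nonneg_right hsqyh (by positivity)
    calc κ * y * h = κ * ((Real.sqrt y * Real.sqrt h) * (Real.sqrt y * Real.sqrt h)) := by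
          rw [← e2]; ring
      _ ≤ κ * (Bc σ Y0 T * (Real.sqrt y * Real.sqrt h)) := mul_le_mul_of_nonneg_left e3 hκ
      _ = κ * Bc σ Y0 T * Real.sqrt h * Real.sqrt y := by ring
  have hD : Dc κ θ σ Y0 T = κ * θ + σ ^ 2 + 2 * σ * Real.sqrt (κ * θ) + 2 * σ + κ * Bc σ Y0 T :=
    rfl
  have hrest : (0:ℝ) ≤ (κ * θ + σ ^ 2 + 2 * σ * Real.sqrt (κ * θ)) * Real.sqrt h * (1 + Real.sqrt y) := by
    positivity
  rw [hD]
  nlinarith [hlb, hκyh, hrest, mul_nonneg hσ hsh,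
    mul_nonneg (mul_nonneg hκ hBnn) hsh,
    mul_nonneg (mul_nonneg (mul_nonneg hκ hBnn) hsh) hsy]

end Combined

end CIRAux
namespace CIRAux

/-- The Gronwall constant. -/
def Kc (κ θ σ Y0 T : ℝ) (m : ℕ) : ℝ := (m : ℝ) * (κ * θ) + (1 + 2 * Dc κ θ σ Y0 T) ^ m

lemma Kc_nonneg (κ θ σ Y0 T : ℝ) (m : ℕ) (hκ : 0 ≤ κ) (hθ : 0 ≤ θ) (hσ : 0 ≤ σ) (hT : 0 ≤ T) :
    0 ≤ Kc κ θ σ Y0 T m := by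
  have := Dc_nonneg κ θ σ Y0 T hκ hθ hσ hT
  unfold Kc; positivity

lemma node_moment_step (κ θ σ Y0 T h : ℝ) (N n k M : ℕ)
    (hκ : 0 < κ) (hθ : 0 < θ) (hσ : 0 < σ) (hh : 0 < h) (hh1 : h ≤ 1)
    (hTN : (N : ℝ) * h = T) (hk : k ≤ n) (hn : n < N) :
    puF κ θ σ Y0 h n k * ynode σ Y0 h (n + 1) (kuF κ θ σ Y0 h n k) ^ (M + 2)
      + pdF κ θ σ Y0 h n k * ynode σ Y0 h (n + 1) (kdF κ θ σ Y0 h n k) ^ (M + 2)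
      ≤ ynode σ Y0 h n k ^ (M + 2)
        + Kc κ θ σ Y0 T (M + 2) * h * (1 + ynode σ Y0 h n k ^ (M + 2)) := by
  have hT : 0 ≤ T := by rw [← hTN]; positivity
  set y := ynode σ Y0 h n k with hy
  set yu := ynode σ Y0 h (n + 1) (kuF κ θ σ Y0 h n k) with hyu
  set yd := ynode σ Y0 h (n + 1) (kdF κ θ σ Y0 h n k) with hyd
  set pu := puF κ θ σ Y0 h n k with hpu
  have hδu0 : 0 ≤ yu - y := sub_nonneg.2 (y_le_yu κ θ σ Y0 h n k hσ.le hk)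
  have hδd0 : 0 ≤ y - yd := sub_nonneg.2 (yd_le_y κ θ σ Y0 h n k hσ.le)
  have hδu : yu - y ≤ Dc κ θ σ Y0 T * Real.sqrt h * (1 + Real.sqrt y) :=
    delta_u_bound κ θ σ Y0 T h n k hκ.le hθ.le hσ.le hh hh1 hk hT
  have hδd : y - yd ≤ Dc κ θ σ Y0 T * Real.sqrt h * (1 + Real.sqrt y) :=
    delta_d_bound κ θ σ Y0 T h N n k hκ.le hθ.le hσ.le hh hh1 hTN hk hn.le
  have hmean0 := mean_le κ θ σ Y0 h n k hκ.le hθ.le hh.le hσ.le hk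
  simp only [pdF, ← hpu, ← hy, ← hyu, ← hyd] at hmean0
  have hmean : pu * (yu - y) - (1 - pu) * (y - yd) ≤ κ * θ * h := by nlinarith [hmean0]
  have key := step_poly M (κ * θ) (Dc κ θ σ Y0 T) h y (yu - y) (y - yd) pu
    hh.le hh1 (ynode_nonneg σ Y0 h n k) (by positivity)
    (Dc_nonneg κ θ σ Y0 T hκ.le hθ.le hσ.le hT) hδu0 hδd0 hδu hδd
    (pu_nonneg κ θ σ Y0 h n k) (pu_le_one κ θ σ Y0 h n k) hmean
  have e1 : y + (yu - y) = yu := by ring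
  have e2 : y - (y - yd) = yd := by ring
  rw [e1, e2] at key
  simp only [pdF, ← hpu]
  calc pu * yu ^ (M + 2) + (1 - pu) * yd ^ (M + 2)
      ≤ y ^ (M + 2) + (((M:ℝ) + 2) * (κ * θ) + (1 + 2 * Dc κ θ σ Y0 T) ^ (M + 2)) * h
          * (1 + y ^ (M + 2)) := key
    _ = y ^ (M + 2) + Kc κ θ σ Y0 T (M + 2) * h * (1 + y ^ (M + 2)) := by
        unfold Kc; push_cast; ring

end CIRAux
namespace CIRAux

open MeasureTheory

section Prob

variable {Ω : Type} [MeasurableSpace Ω] (P : Measure Ω) [IsProbabilityMeasure P]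
  (Y : ℕ → Ω → ℝ) (κ θ σ Y0 h : ℝ) (N : ℕ)

lemma comap_le (hY : ∀ n, Measurable (Y n)) (n : ℕ) :
    MeasurableSpace.comap (fun ω' => fun i : Fin (n + 1) => Y i ω') inferInstance
      ≤ (inferInstance : MeasurableSpace Ω) :=
  measurable_iff_comap_le.mp (measurable_pi_lambda _ fun i => hY i)

lemma event_measurable (hY : ∀ n, Measurable (Y n)) (n : ℕ) (c : ℝ) :
    MeasurableSet[MeasurableSpace.comap (fun ω' => fun i : Fin (n + 1) => Y i ω')
      inferInstance] {ω | Y n ω = c} := by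
  refine ⟨(fun v : Fin (n + 1) → ℝ => v ⟨n, n.lt_succ_self⟩) ⁻¹' {c}, ?_, ?_⟩
  · exact (measurable_pi_apply _) (measurableSet_singleton c)
  · rfl

lemma setintegral_step (hc : IsCIRTreeChain κ θ σ Y0 h N P Y) {n k : ℕ} (hn : n < N)
    (hk : k ≤ n) (g : ℝ → ℝ) (hg : Measurable g) (Mg : ℝ) (hMg : ∀ x, |g x| ≤ Mg)
    (S : Set Ω)
    (hS : MeasurableSet[MeasurableSpace.comap (fun ω' => fun i : Fin (n + 1) => Y i ω')
      inferInstance] S)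
    (hSsub : ∀ ω ∈ S, Y n ω = ynode σ Y0 h n k) :
    ∫ ω in S, g (Y (n + 1) ω) ∂P
      = (puF κ θ σ Y0 h n k * g (ynode σ Y0 h (n + 1) (kuF κ θ σ Y0 h n k))
          + pdF κ θ σ Y0 h n k * g (ynode σ Y0 h (n + 1) (kdF κ θ σ Y0 h n k)))
        * (P S).toReal := by
  obtain ⟨hY, hY0', hlat, hCE⟩ := hc
  have hle := comap_le Y hY n
  haveI hfin : IsFiniteMeasure (P.trim hle) := by
    constructor
    rw [trim_measurableSet_eq hle MeasurableSet.univ]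
    exact measure_lt_top P _
  have hint : Integrable (fun ω => g (Y (n + 1) ω)) P := by
    refine Integrable.mono' (integrable_const Mg)
      ((hg.comp (hY (n + 1))).aestronglyMeasurable) ?_
    exact Filter.Eventually.of_forall fun ω => hMg _
  have h1 := (setIntegral_condExp hle hint hS).symm
  have hCE' := hCE n hn k hk g hg ⟨Mg, hMg⟩
  have h2 : ∫ ω in S, (P[(fun ω' => g (Y (n + 1) ω')) |
        MeasurableSpace.comap (fun ω' => fun i : Fin (n + 1) => Y i ω') inferInstance]) ω ∂P
      = ∫ _ω in S, (puF κ θ σ Y0 h n k * g (ynode σ Y0 h (n + 1) (kuF κ θ σ Y0 h n k))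
          + pdF κ θ σ Y0 h n k * g (ynode σ Y0 h (n + 1) (kdF κ θ σ Y0 h n k))) ∂P := by
    apply setIntegral_congr_ae (hle S hS)
    filter_upwards [hCE'] with ω hω hmem
    exact hω (hSsub ω hmem)
  rw [h1, h2, setIntegral_const, smul_eq_mul, mul_comm]; rfl

lemma support_step (hc : IsCIRTreeChain κ θ σ Y0 h N P Y) {n k : ℕ} (hn : n < N)
    (hk : k ≤ n) :
    ∀ᵐ ω ∂P, Y n ω = ynode σ Y0 h n k →
      (Y (n + 1) ω = ynode σ Y0 h (n + 1) (kuF κ θ σ Y0 h n k)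
        ∨ Y (n + 1) ω = ynode σ Y0 h (n + 1) (kdF κ θ σ Y0 h n k)) := by
  have hY := hc.1
  set yu := ynode σ Y0 h (n + 1) (kuF κ θ σ Y0 h n k) with hyu
  set yd := ynode σ Y0 h (n + 1) (kdF κ θ σ Y0 h n k) with hyd
  set g : ℝ → ℝ := fun x => min (min |x - yu| |x - yd|) 1 with hgdef
  have hgm : Measurable g :=
    (((continuous_id.sub continuous_const).abs.min
      ((continuous_id.sub continuous_const).abs)).min continuous_const).measurable
  have hgnn : ∀ x, 0 ≤ g x := fun x =>
    le_min (le_min (abs_nonneg _) (abs_nonneg _)) zero_le_one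
  have hgb : ∀ x, |g x| ≤ 1 := fun x => by
    rw [abs_of_nonneg (hgnn x)]; exact min_le_right _ _
  set A := {ω | Y n ω = ynode σ Y0 h n k} with hA
  have hAm := event_measurable Y hY n (ynode σ Y0 h n k)
  have hgu : g yu = 0 := by
    show min (min |yu - yu| |yu - yd|) 1 = 0
    rw [sub_self, abs_zero, min_eq_left (abs_nonneg (yu - yd)), min_eq_left zero_le_one]
  have hgd : g yd = 0 := by
    show min (min |yd - yu| |yd - yd|) 1 = 0
    rw [sub_self, abs_zero, min_eq_right (abs_nonneg (yd - yu)), min_eq_left zero_le_one]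
  have hzero : ∫ ω in A, g (Y (n + 1) ω) ∂P = 0 := by
    rw [setintegral_step P Y κ θ σ Y0 h N hc hn hk g hgm 1 hgb A hAm (fun ω hω => hω)]
    rw [← hyu, ← hyd, hgu, hgd]
    ring
  have hint : Integrable (fun ω => g (Y (n + 1) ω)) P := by
    refine Integrable.mono' (integrable_const 1)
      ((hgm.comp (hY (n + 1))).aestronglyMeasurable) ?_
    exact Filter.Eventually.of_forall fun ω => hgb _
  have h3 : (fun ω => g (Y (n + 1) ω)) =ᵐ[P.restrict A] 0 := by
    rw [← integral_eq_zero_iff_of_nonneg (fun ω => hgnn _) hint.restrict]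
    exact hzero
  have hAmb : MeasurableSet A := comap_le Y hY n A hAm
  have h4 : ∀ᵐ ω ∂P, ω ∈ A → g (Y (n + 1) ω) = 0 :=
    (ae_restrict_iff' hAmb).mp h3
  filter_upwards [h4] with ω hω hmem
  have hg0 : g (Y (n + 1) ω) = 0 := hω hmem
  by_contra hcon
  push_neg at hcon
  obtain ⟨h1, h2⟩ := hcon
  have hp1 : 0 < |Y (n + 1) ω - yu| := abs_pos.2 (sub_ne_zero.2 h1)
  have hp2 : 0 < |Y (n + 1) ω - yd| := abs_pos.2 (sub_ne_zero.2 h2)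
  have : 0 < g (Y (n + 1) ω) := lt_min (lt_min hp1 hp2) one_pos
  rw [hg0] at this
  exact lt_irrefl 0 this

end Prob

end CIRAux
namespace CIRAux

open MeasureTheory

section Prob2

variable {Ω : Type} [MeasurableSpace Ω] (P : Measure Ω) [IsProbabilityMeasure P]
  (Y : ℕ → Ω → ℝ) (κ θ σ Y0 T h : ℝ) (N : ℕ)

lemma moment_rec (hc : IsCIRTreeChain κ θ σ Y0 h N P Y)
    (hκ : 0 < κ) (hθ : 0 < θ) (hσ : 0 < σ) (hh : 0 < h) (hh1 : h ≤ 1)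
    (hTN : (N : ℝ) * h = T) (M : ℕ) {n : ℕ} (hn : n < N) :
    ∫ ω, Y (n + 1) ω ^ (M + 2) ∂P ≤ ∫ ω, Y n ω ^ (M + 2) ∂P
      + Kc κ θ σ Y0 T (M + 2) * h * (1 + ∫ ω, Y n ω ^ (M + 2) ∂P) := by
  have hY := hc.1
  have hlat := hc.2.2.1
  have hle := comap_le Y hY n
  -- partition of Ω according to the position at time n
  set A : ℕ → Set Ω := fun k => {ω | Y n ω = ynode σ Y0 h n k} with hAdef
  set B : ℕ → Set Ω := fun k => A k \ ⋃ j ∈ Finset.range k, A j with hBdef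
  have hAm : ∀ k, MeasurableSet[MeasurableSpace.comap
      (fun ω' => fun i : Fin (n + 1) => Y i ω') inferInstance] (A k) :=
    fun k => event_measurable Y hY n (ynode σ Y0 h n k)
  have hBmG : ∀ k, MeasurableSet[MeasurableSpace.comap
      (fun ω' => fun i : Fin (n + 1) => Y i ω') inferInstance] (B k) := fun k =>
    (hAm k).diff (MeasurableSet.biUnion (Finset.range k).countable_toSet fun j _ => hAm j)
  have hBm : ∀ k, MeasurableSet (B k) := fun k => hle _ (hBmG k)
  have hBsub : ∀ k, B k ⊆ A k := fun k => Set.diff_subset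
  have hdisj : (↑(Finset.range (n + 1)) : Set ℕ).Pairwise (Function.onFun Disjoint B) := by
    intro i _ j _ hij
    have key : ∀ a b : ℕ, a < b → Disjoint (B a) (B b) := by
      intro a b hab
      rw [Set.disjoint_left]
      intro ω hωa hωb
      have h1 : ω ∈ A a := hBsub a hωa
      have h2 : ω ∉ ⋃ j ∈ Finset.range b, A j := hωb.2
      exact h2 (Set.mem_biUnion (Finset.mem_range.2 hab) h1)
    rcases lt_or_gt_of_ne hij with hlt | hgt
    · exact key i j hlt
    · exact (key j i hgt).symm
  have hcov : ⋃ k ∈ Finset.range (n + 1), B k = Set.univ := by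
    ext ω
    simp only [Set.mem_iUnion, Set.mem_univ, iff_true, exists_prop]
    obtain ⟨k, hk, hAk⟩ := hlat n hn.le ω
    have hne : {j : ℕ | ω ∈ A j}.Nonempty := ⟨k, hAk⟩
    set k₀ := sInf {j : ℕ | ω ∈ A j} with hk₀
    have hmem : ω ∈ A k₀ := Nat.sInf_mem hne
    have hk₀le : k₀ ≤ k := Nat.sInf_le hAk
    refine ⟨k₀, Finset.mem_range.2 (by omega), hmem, ?_⟩
    intro hbad
    simp only [Set.mem_iUnion, exists_prop] at hbad
    obtain ⟨j, hj, hωj⟩ := hbad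
    exact Nat.notMem_of_lt_sInf (by rw [← hk₀]; exact Finset.mem_range.1 hj) hωj
  -- decomposition of integrals
  have hdec : ∀ f : Ω → ℝ, Integrable f P →
      ∫ ω, f ω ∂P = ∑ k ∈ Finset.range (n + 1), ∫ ω in B k, f ω ∂P := by
    intro f hf
    rw [← setIntegral_univ, ← hcov,
      integral_biUnion_finset _ (fun i _ => hBm i) hdisj (fun i _ => hf.integrableOn)]
  -- bounds for the chain values
  set R := ynode σ Y0 h (n + 1) (n + 1) with hR
  have hRnn : 0 ≤ R := ynode_nonneg _ _ _ _ _
  have hYR : ∀ ω, 0 ≤ Y (n + 1) ω ∧ Y (n + 1) ω ≤ R := by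
    intro ω
    obtain ⟨k', hk', heq⟩ := hlat (n + 1) (by omega) ω
    rw [heq]
    exact ⟨ynode_nonneg _ _ _ _ _, ynode_mono σ Y0 h hσ.le hk'⟩
  set Rn := ynode σ Y0 h n n with hRn
  have hYRn : ∀ ω, 0 ≤ Y n ω ∧ Y n ω ≤ Rn := by
    intro ω
    obtain ⟨k', hk', heq⟩ := hlat n hn.le ω
    rw [heq]
    exact ⟨ynode_nonneg _ _ _ _ _, ynode_mono σ Y0 h hσ.le hk'⟩
  -- the clamped power function
  set g : ℝ → ℝ := fun x => min (max x 0) R ^ (M + 2) with hgdef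
  have hgm : Measurable g :=
    (((continuous_id.max continuous_const).min continuous_const).pow (M + 2)).measurable
  have hgeval : ∀ x, 0 ≤ x → x ≤ R → g x = x ^ (M + 2) := by
    intro x hx hxR
    show min (max x 0) R ^ (M + 2) = x ^ (M + 2)
    rw [max_eq_left hx, min_eq_left hxR]
  have hgb : ∀ x, |g x| ≤ R ^ (M + 2) := by
    intro x
    have h1 : 0 ≤ min (max x 0) R := le_min (le_max_right x 0) hRnn
    have h2 : min (max x 0) R ≤ R := min_le_right _ _
    rw [hgdef]
    simp only []
    rw [abs_of_nonneg (pow_nonneg h1 _)]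
    exact pow_le_pow_left₀ h1 h2 (M + 2)
  have hgY : ∀ ω, g (Y (n + 1) ω) = Y (n + 1) ω ^ (M + 2) := fun ω =>
    hgeval _ (hYR ω).1 (hYR ω).2
  -- integrability
  have hFint : Integrable (fun ω => Y (n + 1) ω ^ (M + 2)) P := by
    refine Integrable.mono' (integrable_const (R ^ (M + 2)))
      (((hY (n + 1)).pow_const (M + 2)).aestronglyMeasurable) ?_
    refine Filter.Eventually.of_forall fun ω => ?_
    rw [Real.norm_eq_abs, abs_of_nonneg (pow_nonneg (hYR ω).1 _)]
    exact pow_le_pow_left₀ (hYR ω).1 (hYR ω).2 (M + 2)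
  have hFnint : Integrable (fun ω => Y n ω ^ (M + 2)) P := by
    refine Integrable.mono' (integrable_const (Rn ^ (M + 2)))
      (((hY n).pow_const (M + 2)).aestronglyMeasurable) ?_
    refine Filter.Eventually.of_forall fun ω => ?_
    rw [Real.norm_eq_abs, abs_of_nonneg (pow_nonneg (hYRn ω).1 _)]
    exact pow_le_pow_left₀ (hYRn ω).1 (hYRn ω).2 (M + 2)
  -- per-piece computation
  have hpiece : ∀ k ∈ Finset.range (n + 1),
      ∫ ω in B k, Y (n + 1) ω ^ (M + 2) ∂P
        = (puF κ θ σ Y0 h n k * ynode σ Y0 h (n + 1) (kuF κ θ σ Y0 h n k) ^ (M + 2)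
            + pdF κ θ σ Y0 h n k * ynode σ Y0 h (n + 1) (kdF κ θ σ Y0 h n k) ^ (M + 2))
          * (P (B k)).toReal := by
    intro k hkmem
    have hk : k ≤ n := by
      have := Finset.mem_range.1 hkmem; omega
    have e1 : ∫ ω in B k, Y (n + 1) ω ^ (M + 2) ∂P = ∫ ω in B k, g (Y (n + 1) ω) ∂P := by
      refine setIntegral_congr_ae (hBm k) ?_
      exact Filter.Eventually.of_forall fun ω _ => (hgY ω).symm
    rw [e1, setintegral_step P Y κ θ σ Y0 h N hc hn hk g hgm (R ^ (M + 2)) hgb (B k)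
      (hBmG k) (fun ω hω => hBsub k hω)]
    have hyu : g (ynode σ Y0 h (n + 1) (kuF κ θ σ Y0 h n k))
        = ynode σ Y0 h (n + 1) (kuF κ θ σ Y0 h n k) ^ (M + 2) :=
      hgeval _ (ynode_nonneg _ _ _ _ _) (ynode_mono σ Y0 h hσ.le (ku_le κ θ σ Y0 h n k))
    have hyd : g (ynode σ Y0 h (n + 1) (kdF κ θ σ Y0 h n k))
        = ynode σ Y0 h (n + 1) (kdF κ θ σ Y0 h n k) ^ (M + 2) :=
      hgeval _ (ynode_nonneg _ _ _ _ _)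
        (ynode_mono σ Y0 h hσ.le (le_trans (kd_le_k κ θ σ Y0 h n k) (by omega)))
    rw [hyu, hyd]
  -- the value of Y n on B k
  have hYnB : ∀ k ∈ Finset.range (n + 1),
      ∫ ω in B k, Y n ω ^ (M + 2) ∂P = ynode σ Y0 h n k ^ (M + 2) * (P (B k)).toReal := by
    intro k _
    have e1 : ∫ ω in B k, Y n ω ^ (M + 2) ∂P
        = ∫ _ω in B k, ynode σ Y0 h n k ^ (M + 2) ∂P := by
      refine setIntegral_congr_ae (hBm k) ?_
      refine Filter.Eventually.of_forall fun ω hω => ?_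
      have heq : Y n ω = ynode σ Y0 h n k := hBsub k hω
      rw [heq]
    rw [e1, setIntegral_const, smul_eq_mul, mul_comm]; rfl
  have hsumP : ∑ k ∈ Finset.range (n + 1), (P (B k)).toReal = 1 := by
    have h1 := hdec (fun _ => (1 : ℝ)) (integrable_const 1)
    simp only [integral_const, probReal_univ, Measure.real, measure_univ, ENNReal.toReal_one, one_smul, smul_eq_mul,
      mul_one, Measure.restrict_apply_univ] at h1
    exact h1.symm
  have hsumn : ∑ k ∈ Finset.range (n + 1), ynode σ Y0 h n k ^ (M + 2) * (P (B k)).toReal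
      = ∫ ω, Y n ω ^ (M + 2) ∂P := by
    rw [hdec _ hFnint]
    exact (Finset.sum_congr rfl hYnB).symm
  -- put everything together
  have hKnn : 0 ≤ Kc κ θ σ Y0 T (M + 2) :=
    Kc_nonneg κ θ σ Y0 T (M + 2) hκ.le hθ.le hσ.le (by rw [← hTN]; positivity)
  calc ∫ ω, Y (n + 1) ω ^ (M + 2) ∂P
      = ∑ k ∈ Finset.range (n + 1), ∫ ω in B k, Y (n + 1) ω ^ (M + 2) ∂P := hdec _ hFint
    _ = ∑ k ∈ Finset.range (n + 1),
          (puF κ θ σ Y0 h n k * ynode σ Y0 h (n + 1) (kuF κ θ σ Y0 h n k) ^ (M + 2)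
            + pdF κ θ σ Y0 h n k * ynode σ Y0 h (n + 1) (kdF κ θ σ Y0 h n k) ^ (M + 2))
          * (P (B k)).toReal := Finset.sum_congr rfl hpiece
    _ ≤ ∑ k ∈ Finset.range (n + 1),
          (ynode σ Y0 h n k ^ (M + 2)
            + Kc κ θ σ Y0 T (M + 2) * h * (1 + ynode σ Y0 h n k ^ (M + 2)))
          * (P (B k)).toReal := by
        refine Finset.sum_le_sum fun k hkmem => ?_
        have hk : k ≤ n := by
          have := Finset.mem_range.1 hkmem; omega
        exact mul_le_mul_of_nonneg_right
          (node_moment_step κ θ σ Y0 T h N n k M hκ hθ hσ hh hh1 hTN hk hn)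
          ENNReal.toReal_nonneg
    _ = ∑ k ∈ Finset.range (n + 1), (ynode σ Y0 h n k ^ (M + 2) * (P (B k)).toReal)
          + Kc κ θ σ Y0 T (M + 2) * h * (∑ k ∈ Finset.range (n + 1), (P (B k)).toReal)
          + Kc κ θ σ Y0 T (M + 2) * h
            * (∑ k ∈ Finset.range (n + 1), ynode σ Y0 h n k ^ (M + 2) * (P (B k)).toReal) := by
        rw [Finset.mul_sum, Finset.mul_sum, ← Finset.sum_add_distrib, ← Finset.sum_add_distrib]
        refine Finset.sum_congr rfl fun k _ => by ring
    _ = ∫ ω, Y n ω ^ (M + 2) ∂P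
          + Kc κ θ σ Y0 T (M + 2) * h * (1 + ∫ ω, Y n ω ^ (M + 2) ∂P) := by
        rw [hsumn, hsumP]; ring

lemma increment_ae (hc : IsCIRTreeChain κ θ σ Y0 h N P Y)
    (hκ : 0 < κ) (hθ : 0 < θ) (hσ : 0 < σ) (hh : 0 < h) (hh1 : h ≤ 1)
    (hTN : (N : ℝ) * h = T) {n : ℕ} (hn : n < N) :
    ∀ᵐ ω ∂P, |Y (n + 1) ω - Y n ω|
      ≤ Dc κ θ σ Y0 T * Real.sqrt h * (1 + Real.sqrt (Y n ω)) := by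
  have hlat := hc.2.2.1
  have hall : ∀ᵐ ω ∂P, ∀ k : ℕ, k ≤ n → (Y n ω = ynode σ Y0 h n k →
      (Y (n + 1) ω = ynode σ Y0 h (n + 1) (kuF κ θ σ Y0 h n k)
        ∨ Y (n + 1) ω = ynode σ Y0 h (n + 1) (kdF κ θ σ Y0 h n k))) := by
    rw [MeasureTheory.ae_all_iff]
    intro k
    rcases le_or_gt k n with hk | hk
    · filter_upwards [support_step P Y κ θ σ Y0 h N hc hn hk] with ω hω
      exact fun _ => hω
    · exact Filter.Eventually.of_forall fun ω h' => absurd h' (by omega)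
  filter_upwards [hall] with ω hω
  obtain ⟨k, hk, heq⟩ := hlat n hn.le ω
  rcases hω k hk heq with hu | hd
  · rw [heq, hu]
    have h1 := y_le_yu κ θ σ Y0 h n k hσ.le hk
    rw [abs_of_nonneg (by linarith)]
    have := delta_u_bound κ θ σ Y0 T h n k hκ.le hθ.le hσ.le hh hh1 hk
      (by rw [← hTN]; positivity)
    linarith
  · rw [heq, hd]
    have h1 := yd_le_y κ θ σ Y0 h n k hσ.le
    rw [abs_of_nonpos (by linarith)]
    have := delta_d_bound κ θ σ Y0 T h N n k hκ.le hθ.le hσ.le hh hh1 hTN hk hn.le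
    linarith

end Prob2

end CIRAux
namespace CIRAux

open MeasureTheory

section Prob3

variable {Ω : Type} [MeasurableSpace Ω] (P : Measure Ω) [IsProbabilityMeasure P]
  (Y : ℕ → Ω → ℝ) (κ θ σ Y0 T h : ℝ) (N : ℕ)

lemma chain_bounds (hc : IsCIRTreeChain κ θ σ Y0 h N P Y) (hσ : 0 ≤ σ) {n : ℕ} (hn : n ≤ N)
    (ω : Ω) : 0 ≤ Y n ω ∧ Y n ω ≤ ynode σ Y0 h n n := by
  obtain ⟨k, hk, heq⟩ := hc.2.2.1 n hn ω
  rw [heq]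
  exact ⟨ynode_nonneg _ _ _ _ _, ynode_mono σ Y0 h hσ hk⟩

lemma chain_pow_int (hc : IsCIRTreeChain κ θ σ Y0 h N P Y) (hσ : 0 ≤ σ) {n : ℕ} (hn : n ≤ N)
    (m : ℕ) : Integrable (fun ω => Y n ω ^ m) P := by
  refine Integrable.mono' (integrable_const (ynode σ Y0 h n n ^ m))
    (((hc.1 n).pow_const m).aestronglyMeasurable) ?_
  refine Filter.Eventually.of_forall fun ω => ?_
  rw [Real.norm_eq_abs, abs_of_nonneg (pow_nonneg (chain_bounds P Y κ θ σ Y0 h N hc hσ hn ω).1 _)]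
  exact pow_le_pow_left₀ (chain_bounds P Y κ θ σ Y0 h N hc hσ hn ω).1
    (chain_bounds P Y κ θ σ Y0 h N hc hσ hn ω).2 m

lemma moment_bound (hc : IsCIRTreeChain κ θ σ Y0 h N P Y)
    (hκ : 0 < κ) (hθ : 0 < θ) (hσ : 0 < σ) (hY0 : 0 < Y0) (hh : 0 < h) (hh1 : h ≤ 1)
    (hTN : (N : ℝ) * h = T) (M : ℕ) {n : ℕ} (hn : n ≤ N) :
    1 + ∫ ω, Y n ω ^ (M + 2) ∂P
      ≤ Real.exp (Kc κ θ σ Y0 T (M + 2) * T) * (1 + Y0 ^ (M + 2)) := by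
  have hT : 0 ≤ T := by rw [← hTN]; positivity
  have hK : 0 ≤ Kc κ θ σ Y0 T (M + 2) := Kc_nonneg _ _ _ _ _ _ hκ.le hθ.le hσ.le hT
  set K := Kc κ θ σ Y0 T (M + 2) with hKdef
  have hKh : 0 ≤ K * h := by positivity
  -- main induction
  have main : ∀ n ≤ N, 1 + ∫ ω, Y n ω ^ (M + 2) ∂P
      ≤ (1 + K * h) ^ n * (1 + Y0 ^ (M + 2)) := by
    intro n hn
    induction n with
    | zero =>
        have he : (fun ω => Y 0 ω ^ (M + 2)) = fun _ω => Y0 ^ (M + 2) :=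
          funext fun ω => by rw [hc.2.1 ω]
        rw [he, integral_const, probReal_univ, one_smul, pow_zero, one_mul]
    | succ n ih =>
        have hnN : n ≤ N := by omega
        have hlt : n < N := by omega
        have ihn := ih hnN
        have hrec := moment_rec P Y κ θ σ Y0 T h N hc hκ hθ hσ hh hh1 hTN M hlt
        have step : 1 + ∫ ω, Y (n + 1) ω ^ (M + 2) ∂P
            ≤ (1 + K * h) * (1 + ∫ ω, Y n ω ^ (M + 2) ∂P) := by
          rw [← hKdef] at hrec
          nlinarith [hrec]
        calc 1 + ∫ ω, Y (n + 1) ω ^ (M + 2) ∂P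
            ≤ (1 + K * h) * (1 + ∫ ω, Y n ω ^ (M + 2) ∂P) := step
          _ ≤ (1 + K * h) * ((1 + K * h) ^ n * (1 + Y0 ^ (M + 2))) :=
              mul_le_mul_of_nonneg_left ihn (by linarith)
          _ = (1 + K * h) ^ (n + 1) * (1 + Y0 ^ (M + 2)) := by ring
  have hexp : (1 + K * h) ^ n * (1 + Y0 ^ (M + 2)) ≤ Real.exp (K * T) * (1 + Y0 ^ (M + 2)) := by
    have h1 : (1 + K * h) ^ n ≤ (1 + K * h) ^ N := pow_le_pow_right₀ (by linarith) hn
    have h2 : (1 + K * h) ^ N ≤ Real.exp (K * h) ^ N :=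
      pow_le_pow_left₀ (by linarith) (by linarith [Real.add_one_le_exp (K * h)]) N
    have h3 : Real.exp (K * h) ^ N = Real.exp (K * T) := by
      rw [← Real.exp_nat_mul, ← hTN]; ring_nf
    have h4 : (0:ℝ) ≤ 1 + Y0 ^ (M + 2) := by positivity
    have := h3 ▸ h2
    nlinarith [h1, this]
  exact le_trans (main n hn) hexp

end Prob3

lemma rpow_le_one_add_pow (x : ℝ) (hx : 0 ≤ x) (p : ℝ) (hp : 0 ≤ p) (m : ℕ)
    (hpm : p ≤ (m : ℝ)) : x ^ p ≤ 1 + x ^ m := by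
  rcases le_total x 1 with hc | hc
  · have h1 : x ^ p ≤ 1 := Real.rpow_le_one hx hc hp
    have h2 : (0:ℝ) ≤ x ^ m := by positivity
    linarith
  · have h1 : x ^ p ≤ x ^ (m : ℝ) := Real.rpow_le_rpow_of_exponent_le hc hpm
    rw [Real.rpow_natCast] at h1
    have h2 : (0:ℝ) ≤ x ^ m := by positivity
    linarith

lemma one_add_sqrt_rpow (y : ℝ) (hy : 0 ≤ y) (p : ℝ) (hp : 0 ≤ p) (m : ℕ)
    (hpm : p ≤ (m : ℝ)) : (1 + Real.sqrt y) ^ p ≤ 2 ^ p * (1 + y ^ m) := by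
  set s := Real.sqrt y with hs
  have hsnn : 0 ≤ s := Real.sqrt_nonneg y
  have h1 : (1 + s) ^ p ≤ (2 * max 1 s) ^ p := by
    apply Real.rpow_le_rpow (by linarith) _ hp
    rcases le_total s 1 with hc | hc
    · rw [max_eq_left hc]; linarith
    · rw [max_eq_right hc]; linarith
  have h2 : (2 * max 1 s) ^ p = 2 ^ p * (max 1 s) ^ p :=
    Real.mul_rpow (by norm_num) (le_max_of_le_left zero_le_one)
  have h3 : (max 1 s) ^ p ≤ 1 + y ^ m := by
    rcases le_total s 1 with hc | hc
    · rw [max_eq_left hc, Real.one_rpow]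
      have : (0:ℝ) ≤ y ^ m := by positivity
      linarith
    · rw [max_eq_right hc]
      have h4 : s ^ p ≤ s ^ ((2 * m : ℕ) : ℝ) := by
        apply Real.rpow_le_rpow_of_exponent_le hc
        push_cast
        linarith
      rw [Real.rpow_natCast] at h4
      have h5 : s ^ (2 * m) = y ^ m := by
        rw [pow_mul, hs, Real.sq_sqrt hy]
      rw [h5] at h4
      have : (0:ℝ) ≤ y ^ m := by positivity
      linarith
  calc (1 + s) ^ p ≤ 2 ^ p * (max 1 s) ^ p := by rw [← h2]; exact h1
    _ ≤ 2 ^ p * (1 + y ^ m) := by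
        have : (0:ℝ) ≤ (2:ℝ) ^ p := Real.rpow_nonneg (by norm_num) p
        nlinarith

end CIRAux

open CIRAux

/- STATEMENT 12: uniform `L^p` bounds on the CIR approximating tree and on its
increments: `E[(Y^h_n)^p]^{1/p} ≤ C_p` and `E[|Y^h_{n+1}-Y^h_n|^p]^{1/p} ≤ C_p √h`. -/
theorem stmt_12 (κ θ σ Y0 T : ℝ)
    (hκ : 0 < κ) (hθ : 0 < θ) (hσ : 0 < σ) (hY0 : 0 < Y0) (hT : 0 < T) :
    ∃ hbar : ℝ, 0 < hbar ∧
      ∀ p : ℝ, 1 ≤ p → ∃ C : ℝ, 0 < C ∧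
        ∀ N : ℕ, 1 ≤ N → T / N < hbar →
          ∀ (Ω : Type) [MeasurableSpace Ω] (P : Measure Ω) [IsProbabilityMeasure P]
            (Y : ℕ → Ω → ℝ), IsCIRTreeChain κ θ σ Y0 (T / N) N P Y →
            (∀ n ≤ N, (∫ ω, Y n ω ^ p ∂P) ^ (1 / p) ≤ C) ∧
            ∀ n < N,
              (∫ ω, |Y (n + 1) ω - Y n ω| ^ p ∂P) ^ (1 / p) ≤ C * Real.sqrt (T / N) := by
  refine ⟨1, one_pos, ?_⟩
  intro p hp
  have hp0 : 0 < p := lt_of_lt_of_le one_pos hp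
  set M := Nat.ceil p with hM
  have hpm : p ≤ ((M + 2 : ℕ) : ℝ) := by
    have h1 := Nat.le_ceil p
    push_cast
    rw [hM]
    have : ((⌈p⌉₊ : ℕ) : ℝ) ≤ ((⌈p⌉₊ : ℕ) : ℝ) + 2 := by linarith
    linarith
  have hKnn : 0 ≤ Kc κ θ σ Y0 T (M + 2) :=
    Kc_nonneg κ θ σ Y0 T (M + 2) hκ.le hθ.le hσ.le hT.le
  set A' := Real.exp (Kc κ θ σ Y0 T (M + 2) * T) * (1 + Y0 ^ (M + 2)) with hA'
  have hA'1 : 1 ≤ A' := by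
    have h1 : 1 ≤ Real.exp (Kc κ θ σ Y0 T (M + 2) * T) := Real.one_le_exp (by positivity)
    have h2 : (1:ℝ) ≤ 1 + Y0 ^ (M + 2) := by nlinarith [pow_pos hY0 (M + 2)]
    nlinarith
  have hD : 0 ≤ Dc κ θ σ Y0 T := Dc_nonneg κ θ σ Y0 T hκ.le hθ.le hσ.le hT.le
  refine ⟨(1 + 2 * Dc κ θ σ Y0 T) * A', by nlinarith, ?_⟩
  intro N hN hlt Ω _ P _ Y hc
  have hNpos : (0:ℝ) < (N:ℝ) := by exact_mod_cast Nat.pos_of_ne_zero (by omega)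
  set h := T / N with hhdef
  have hh : 0 < h := div_pos hT hNpos
  have hh1 : h ≤ 1 := le_of_lt hlt
  have hTN : (N : ℝ) * h = T := by
    rw [hhdef]; field_simp
  have hmom : ∀ n ≤ N, 1 + ∫ ω, Y n ω ^ (M + 2) ∂P ≤ A' := fun n hn =>
    moment_bound P Y κ θ σ Y0 T h N hc hκ hθ hσ hY0 hh hh1 hTN M hn
  have hmom' : ∀ n ≤ N, ∫ ω, Y n ω ^ (M + 2) ∂P ≤ A' - 1 := fun n hn => by
    have := hmom n hn; linarith
  have hA'p : A' ^ (1 / p) ≤ A' := by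
    calc A' ^ (1 / p) ≤ A' ^ (1:ℝ) :=
          Real.rpow_le_rpow_of_exponent_le hA'1 (by rw [div_le_one hp0]; exact hp)
      _ = A' := Real.rpow_one A'
  constructor
  · -- uniform L^p bound
    intro n hn
    have hbd := fun ω => chain_bounds P Y κ θ σ Y0 h N hc hσ.le hn ω
    have hint_m : Integrable (fun ω => Y n ω ^ (M + 2)) P :=
      chain_pow_int P Y κ θ σ Y0 h N hc hσ.le hn (M + 2)
    have hmeas_p : Measurable fun ω => Y n ω ^ p :=
      ((continuous_id.rpow_const fun x => Or.inr hp0.le).measurable).comp (hc.1 n)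
    have hptw : ∀ ω, Y n ω ^ p ≤ 1 + Y n ω ^ (M + 2) := fun ω =>
      rpow_le_one_add_pow _ (hbd ω).1 p hp0.le _ hpm
    have hint_p : Integrable (fun ω => Y n ω ^ p) P := by
      refine Integrable.mono' (integrable_const (1 + ynode σ Y0 h n n ^ (M + 2)))
        hmeas_p.aestronglyMeasurable ?_
      refine Filter.Eventually.of_forall fun ω => ?_
      rw [Real.norm_eq_abs, abs_of_nonneg (Real.rpow_nonneg (hbd ω).1 p)]
      have h2 : Y n ω ^ (M + 2) ≤ ynode σ Y0 h n n ^ (M + 2) :=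
        pow_le_pow_left₀ (hbd ω).1 (hbd ω).2 (M + 2)
      linarith [hptw ω]
    have hle1 : ∫ ω, Y n ω ^ p ∂P ≤ 1 + ∫ ω, Y n ω ^ (M + 2) ∂P := by
      have h3 : ∫ ω, Y n ω ^ p ∂P ≤ ∫ ω, (1 + Y n ω ^ (M + 2)) ∂P :=
        integral_mono hint_p ((integrable_const 1).add hint_m) hptw
      have h4 : ∫ ω, (1 + Y n ω ^ (M + 2)) ∂P = 1 + ∫ ω, Y n ω ^ (M + 2) ∂P := by
        rw [integral_add (integrable_const 1) hint_m, integral_const, probReal_univ,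
          one_smul]
      linarith
    have hintnn : 0 ≤ ∫ ω, Y n ω ^ p ∂P :=
      integral_nonneg fun ω => Real.rpow_nonneg (hbd ω).1 p
    calc (∫ ω, Y n ω ^ p ∂P) ^ (1 / p) ≤ A' ^ (1 / p) :=
          Real.rpow_le_rpow hintnn (le_trans hle1 (hmom n hn)) (by positivity)
      _ ≤ A' := hA'p
      _ ≤ (1 + 2 * Dc κ θ σ Y0 T) * A' := le_mul_of_one_le_left (by linarith) (by linarith)
  · -- increment bound
    intro n hn
    set Dq := 2 * Dc κ θ σ Y0 T * Real.sqrt h with hDq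
    have hDqnn : 0 ≤ Dq := by rw [hDq]; positivity
    have hbd := fun ω => chain_bounds P Y κ θ σ Y0 h N hc hσ.le hn.le ω
    have hbd1 := fun ω => chain_bounds P Y κ θ σ Y0 h N hc hσ.le (by omega : n + 1 ≤ N) ω
    have hint_m : Integrable (fun ω => Y n ω ^ (M + 2)) P :=
      chain_pow_int P Y κ θ σ Y0 h N hc hσ.le hn.le (M + 2)
    have hae := increment_ae P Y κ θ σ Y0 T h N hc hκ hθ hσ hh hh1 hTN hn
    -- a.e. pointwise bound on the p-th power of increments
    have haept : ∀ᵐ ω ∂P, |Y (n + 1) ω - Y n ω| ^ p ≤ Dq ^ p * (1 + Y n ω ^ (M + 2)) := by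
      filter_upwards [hae] with ω hω
      have s1 : |Y (n + 1) ω - Y n ω| ^ p
          ≤ (Dc κ θ σ Y0 T * Real.sqrt h * (1 + Real.sqrt (Y n ω))) ^ p :=
        Real.rpow_le_rpow (abs_nonneg _) hω hp0.le
      have s2 : (Dc κ θ σ Y0 T * Real.sqrt h * (1 + Real.sqrt (Y n ω))) ^ p
          = (Dc κ θ σ Y0 T * Real.sqrt h) ^ p * (1 + Real.sqrt (Y n ω)) ^ p :=
        Real.mul_rpow (by positivity) (by positivity)
      have s3 : (1 + Real.sqrt (Y n ω)) ^ p ≤ 2 ^ p * (1 + Y n ω ^ (M + 2)) :=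
        one_add_sqrt_rpow _ (hbd ω).1 p hp0.le _ hpm
      have s4 : (Dc κ θ σ Y0 T * Real.sqrt h) ^ p * (2 ^ p * (1 + Y n ω ^ (M + 2)))
          = Dq ^ p * (1 + Y n ω ^ (M + 2)) := by
        rw [← mul_assoc, ← Real.mul_rpow (by positivity) (by norm_num : (0:ℝ) ≤ 2)]
        have e : Dc κ θ σ Y0 T * Real.sqrt h * 2 = Dq := by rw [hDq]; ring
        rw [e]
      have s5 : (0:ℝ) ≤ (Dc κ θ σ Y0 T * Real.sqrt h) ^ p := Real.rpow_nonneg (by positivity) p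
      calc |Y (n + 1) ω - Y n ω| ^ p
          ≤ (Dc κ θ σ Y0 T * Real.sqrt h) ^ p * (1 + Real.sqrt (Y n ω)) ^ p := by
            rw [← s2]; exact s1
        _ ≤ (Dc κ θ σ Y0 T * Real.sqrt h) ^ p * (2 ^ p * (1 + Y n ω ^ (M + 2))) :=
            mul_le_mul_of_nonneg_left s3 s5
        _ = Dq ^ p * (1 + Y n ω ^ (M + 2)) := s4
    -- integrability
    have hmeas_i : Measurable fun ω => |Y (n + 1) ω - Y n ω| ^ p :=
      ((continuous_id.rpow_const fun x => Or.inr hp0.le).measurable).comp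
        (((hc.1 (n + 1)).sub (hc.1 n)).abs)
    have hint_i : Integrable (fun ω => |Y (n + 1) ω - Y n ω| ^ p) P := by
      refine Integrable.mono'
        (integrable_const ((1 + ynode σ Y0 h n n + ynode σ Y0 h (n + 1) (n + 1)) ^ p))
        hmeas_i.aestronglyMeasurable ?_
      refine Filter.Eventually.of_forall fun ω => ?_
      rw [Real.norm_eq_abs, abs_of_nonneg (Real.rpow_nonneg (abs_nonneg _) p)]
      apply Real.rpow_le_rpow (abs_nonneg _) _ hp0.le
      have := abs_sub (Y (n + 1) ω) (Y n ω)
      have h5 : |Y (n + 1) ω - Y n ω| ≤ |Y (n + 1) ω| + |Y n ω| := abs_sub _ _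
      rw [abs_of_nonneg (hbd1 ω).1, abs_of_nonneg (hbd ω).1] at h5
      have h6 := (hbd ω).2
      have h7 := (hbd1 ω).2
      linarith
    have hint_rhs : Integrable (fun ω => Dq ^ p * (1 + Y n ω ^ (M + 2))) P :=
      ((integrable_const 1).add hint_m).const_mul _
    have hle2 : ∫ ω, |Y (n + 1) ω - Y n ω| ^ p ∂P ≤ Dq ^ p * A' := by
      have h3 := integral_mono_ae hint_i hint_rhs haept
      have h4 : ∫ ω, Dq ^ p * (1 + Y n ω ^ (M + 2)) ∂P
          = Dq ^ p * (1 + ∫ ω, Y n ω ^ (M + 2) ∂P) := by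
        rw [integral_const_mul, integral_add (integrable_const 1) hint_m, integral_const,
          probReal_univ, one_smul]
      have h5 : Dq ^ p * (1 + ∫ ω, Y n ω ^ (M + 2) ∂P) ≤ Dq ^ p * A' :=
        mul_le_mul_of_nonneg_left (hmom n hn.le) (Real.rpow_nonneg hDqnn p)
      rw [h4] at h3
      linarith
    have hintnn : 0 ≤ ∫ ω, |Y (n + 1) ω - Y n ω| ^ p ∂P :=
      integral_nonneg fun ω => Real.rpow_nonneg (abs_nonneg _) p
    have hDqp : (Dq ^ p * A') ^ (1 / p) = Dq * A' ^ (1 / p) := by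
      rw [Real.mul_rpow (Real.rpow_nonneg hDqnn p) (by linarith)]
      congr 1
      rw [← Real.rpow_mul hDqnn, mul_one_div_cancel (ne_of_gt hp0), Real.rpow_one]
    calc (∫ ω, |Y (n + 1) ω - Y n ω| ^ p ∂P) ^ (1 / p)
        ≤ (Dq ^ p * A') ^ (1 / p) := Real.rpow_le_rpow hintnn hle2 (by positivity)
      _ = Dq * A' ^ (1 / p) := hDqp
      _ ≤ Dq * A' := mul_le_mul_of_nonneg_left hA'p hDqnn
      _ = (2 * Dc κ θ σ Y0 T * A') * Real.sqrt h := by rw [hDq]; ring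
      _ ≤ ((1 + 2 * Dc κ θ σ Y0 T) * A') * Real.sqrt h := by
          have : 2 * Dc κ θ σ Y0 T * A' ≤ (1 + 2 * Dc κ θ σ Y0 T) * A' := by nlinarith
          exact mul_le_mul_of_nonneg_right this (Real.sqrt_nonneg h)
end
end

section
/- Let Δx > 0 and let g ∈ C²(ℝ) with g, g', g'' ∈ L¹(ℝ). Then | Σ_{l∈ℤ} g(lΔx)Δx − ∫_ℝ g(x)dx | ≤ (Δx²/12) ∫_ℝ |g''(x)|dx. -/
open MeasureTheory

set_option maxHeartbeats 1000000

section QuadHelpers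

lemma deriv_contDiff {f : ℝ → ℝ} (hf : ContDiff ℝ 2 f) : ContDiff ℝ 1 (deriv f) :=
  (contDiff_succ_iff_deriv.mp (by exact_mod_cast hf : ContDiff ℝ (1+1) f)).2.2

lemma deriv2_continuous {f : ℝ → ℝ} (hf : ContDiff ℝ 2 f) : Continuous (deriv (deriv f)) :=
  (contDiff_succ_iff_deriv.mp (by exact_mod_cast deriv_contDiff hf : ContDiff ℝ (0+1) (deriv f))).2.2.continuous

lemma ibp_kernel (f : ℝ → ℝ) (hf : ContDiff ℝ 2 f) (a b : ℝ) :
    ∫ x in a..b, ((x-a)*(x-b)/2 + (b-a)^2/12) * deriv (deriv f) x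
    = (b-a)^2/12 * (deriv f b - deriv f a) - (b-a)/2*(f b + f a) + ∫ x in a..b, f x := by
  have hf1 : ContDiff ℝ 1 (deriv f) := deriv_contDiff hf
  have hdf : ∀ x : ℝ, HasDerivAt f (deriv f x) x :=
    fun x => (hf.differentiable two_ne_zero).differentiableAt.hasDerivAt
  have hddf : ∀ x : ℝ, HasDerivAt (deriv f) (deriv (deriv f) x) x :=
    fun x => (hf1.differentiable one_ne_zero).differentiableAt.hasDerivAt
  have hcdd : Continuous (deriv (deriv f)) := deriv2_continuous hf
  have hu : ∀ x ∈ Set.uIcc a b, HasDerivAt (fun x => (x-a)*(x-b)/2 + (b-a)^2/12)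
      (x - (a+b)/2) x := by
    intro x _
    have h := ((((hasDerivAt_id x).sub_const a).mul ((hasDerivAt_id x).sub_const b)).div_const 2).add_const ((b-a)^2/12)
    simp only [id, Pi.mul_apply] at h
    exact h.congr_deriv (by ring)
  have h1 := intervalIntegral.integral_mul_deriv_eq_deriv_mul hu (fun x _ => hddf x)
    (((continuous_id.sub continuous_const).intervalIntegrable a b))
    ((hcdd.intervalIntegrable a b))
  have hu2 : ∀ x ∈ Set.uIcc a b, HasDerivAt (fun x => x - (a+b)/2) 1 x :=
    fun x _ => (hasDerivAt_id x).sub_const _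
  have h2 := intervalIntegral.integral_mul_deriv_eq_deriv_mul hu2 (fun x _ => hdf x)
    ((continuous_const.intervalIntegrable a b))
    ((hf1.continuous.intervalIntegrable a b))
  rw [h1, h2]
  have : ∫ x in a..b, 1 * f x = ∫ x in a..b, f x := by simp
  rw [this]; ring


variable {h : ℝ}

lemma pd_Ioc (hh : 0 < h) :
    Pairwise (Function.onFun Disjoint (fun l : ℤ => Set.Ioc ((l:ℝ)*h) (((l:ℝ)+1)*h))) := by
  intro l m hne
  simp only [Function.onFun, Set.disjoint_left]
  intro x hx hx'
  obtain ⟨h1, h2⟩ := hx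
  obtain ⟨h3, h4⟩ := hx'
  have e1 : (l:ℝ) < (m:ℝ)+1 := by
    have := h1.trans_le h4
    exact lt_of_mul_lt_mul_right this hh.le
  have e2 : (m:ℝ) < (l:ℝ)+1 := by
    have := h3.trans_le h2
    exact lt_of_mul_lt_mul_right this hh.le
  have : l = m := by
    have f1 : l < m+1 := by exact_mod_cast e1
    have f2 : m < l+1 := by exact_mod_cast e2
    omega
  exact hne this

lemma union_Ioc (hh : 0 < h) :
    ⋃ l : ℤ, Set.Ioc ((l:ℝ)*h) (((l:ℝ)+1)*h) = Set.univ := by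
  ext x
  simp only [Set.mem_iUnion, Set.mem_univ, iff_true]
  refine ⟨⌈x/h⌉ - 1, ?_, ?_⟩
  · push_cast
    have : (⌈x/h⌉:ℝ) - 1 < x/h := by
      have := Int.ceil_lt_add_one (x/h)
      linarith
    calc ((⌈x/h⌉:ℝ) - 1) * h < x/h * h := by exact mul_lt_mul_of_pos_right this hh
    _ = x := by field_simp
  · push_cast
    have : x/h ≤ (⌈x/h⌉:ℝ) - 1 + 1 := by
      have := Int.le_ceil (x/h); linarith
    calc x = x/h * h := by field_simp
    _ ≤ ((⌈x/h⌉:ℝ) - 1 + 1) * h := by exact mul_le_mul_of_nonneg_right this hh.le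

lemma hasSum_setInt (hh : 0 < h) {f : ℝ → ℝ} (hf : Integrable f) :
    HasSum (fun l : ℤ => ∫ x in Set.Ioc ((l:ℝ)*h) (((l:ℝ)+1)*h), f x) (∫ x, f x) := by
  have := hasSum_integral_iUnion (μ := volume) (f := f)
    (s := fun l : ℤ => Set.Ioc ((l:ℝ)*h) (((l:ℝ)+1)*h))
    (fun l => measurableSet_Ioc) (pd_Ioc hh) (by rw [union_Ioc hh]; exact hf.integrableOn)
  rwa [union_Ioc hh, setIntegral_univ] at this

lemma key_bound {h : ℝ} (hh : 0 < h) {f : ℝ → ℝ} (hc : ContDiff ℝ 1 f)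
    (h0 : Integrable f) (h1 : Integrable (deriv f)) (a : ℝ) :
    |f a| * h ≤ (∫ x in Set.Ioc a (a+h), |f x|) + h * ∫ x in Set.Ioc a (a+h), |deriv f x| := by
  set b := a + h with hb
  have hab : a ≤ b := by linarith
  have hdf : ∀ x : ℝ, HasDerivAt f (deriv f x) x :=
    fun x => (hc.differentiable one_ne_zero).differentiableAt.hasDerivAt
  have hcont : Continuous (deriv f) := (hc.continuous_deriv le_rfl)
  have hptwise : ∀ x ∈ Set.Ioc a b, |f a| ≤ |f x| + ∫ t in Set.Ioc a b, |deriv f t| := by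
    intro x hx
    have hax : a ≤ x := hx.1.le
    have hxb : x ≤ b := hx.2
    have ftc : ∫ t in a..x, deriv f t = f x - f a :=
      intervalIntegral.integral_deriv_eq_sub (fun t _ => (hdf t).differentiableAt)
        (hcont.intervalIntegrable a x)
    have : f a = f x - ∫ t in a..x, deriv f t := by rw [ftc]; ring
    rw [this]
    have e1 : |∫ t in a..x, deriv f t| ≤ ∫ t in Set.Ioc a x, |deriv f t| := by
      rw [show (∫ t in Set.Ioc a x, |deriv f t|) = ∫ t in a..x, |deriv f t| from
        (intervalIntegral.integral_of_le hax).symm]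
      exact intervalIntegral.abs_integral_le_integral_abs hax
    have e2 : (∫ t in Set.Ioc a x, |deriv f t|) ≤ ∫ t in Set.Ioc a b, |deriv f t| := by
      apply setIntegral_mono_set h1.abs.integrableOn
      · filter_upwards with t using abs_nonneg _
      · exact HasSubset.Subset.eventuallyLE (Set.Ioc_subset_Ioc_right hxb)
    calc |f x - ∫ t in a..x, deriv f t| ≤ |f x| + |∫ t in a..x, deriv f t| := abs_sub _ _
    _ ≤ |f x| + ∫ t in Set.Ioc a b, |deriv f t| := by linarith
  have hmeas : volume (Set.Ioc a b) = ENNReal.ofReal h := by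
    rw [Real.volume_Ioc]; congr 1; linarith
  have step : ∫ x in Set.Ioc a b, |f a| ≤
      ∫ x in Set.Ioc a b, (|f x| + ∫ t in Set.Ioc a b, |deriv f t|) := by
    apply setIntegral_mono_on
    · exact integrableOn_const (by rw [hmeas]; exact ENNReal.ofReal_ne_top)
    · exact (h0.abs.integrableOn).add (integrableOn_const (by rw [hmeas]; exact ENNReal.ofReal_ne_top))
    · exact measurableSet_Ioc
    · exact hptwise
  rw [setIntegral_const, integral_add h0.abs.integrableOn
      (integrableOn_const (by rw [hmeas]; exact ENNReal.ofReal_ne_top)),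
      setIntegral_const, measureReal_def, hmeas] at step
  simp only [smul_eq_mul, ENNReal.toReal_ofReal hh.le] at step
  linarith [step]

lemma summable_samples {h : ℝ} (hh : 0 < h) {f : ℝ → ℝ} (hc : ContDiff ℝ 1 f)
    (h0 : Integrable f) (h1 : Integrable (deriv f)) :
    Summable (fun l : ℤ => f ((l:ℝ)*h)) := by
  have hbd : Summable (fun l : ℤ =>
      (1/h) * (∫ x in Set.Ioc ((l:ℝ)*h) (((l:ℝ)+1)*h), |f x|)
      + ∫ x in Set.Ioc ((l:ℝ)*h) (((l:ℝ)+1)*h), |deriv f x|) := by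
    have s1 : HasSum (fun l : ℤ => ∫ x in Set.Ioc ((l:ℝ)*h) (((l:ℝ)+1)*h), |f x|) (∫ x, |f x|) :=
      hasSum_setInt hh h0.abs
    have s2 : HasSum (fun l : ℤ => ∫ x in Set.Ioc ((l:ℝ)*h) (((l:ℝ)+1)*h), |deriv f x|)
        (∫ x, |deriv f x|) := hasSum_setInt hh h1.abs
    exact ((s1.summable.mul_left _).add s2.summable)
  apply Summable.of_abs
  apply hbd.of_nonneg_of_le (fun l => abs_nonneg _)
  intro l
  have := key_bound hh hc h0 h1 ((l:ℝ)*h)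
  have hre : (l:ℝ)*h + h = ((l:ℝ)+1)*h := by ring
  rw [hre] at this
  rw [div_mul_eq_mul_div, one_mul, div_add' _ _ _ hh.ne', le_div_iff₀ hh]
  linarith [this, mul_comm h (∫ x in Set.Ioc ((l:ℝ)*h) (((l:ℝ)+1)*h), |deriv f x|)]

end QuadHelpers

/- STATEMENT 15: quadrature error bound for the trapezoidal-type sum:
for `g ∈ C²(ℝ)` with `g, g', g'' ∈ L¹(ℝ)`,
`|Σ_{l∈ℤ} g(lΔx)Δx - ∫ g| ≤ (Δx²/12) ∫ |g''|`. -/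
theorem stmt_15 (Δx : ℝ) (hΔx : 0 < Δx) (g : ℝ → ℝ)
    (hg : ContDiff ℝ 2 g) (hg0 : Integrable g)
    (hg1 : Integrable (deriv g)) (hg2 : Integrable (deriv (deriv g))) :
    |(∑' l : ℤ, g ((l : ℝ) * Δx)) * Δx - ∫ x, g x| ≤
      Δx ^ 2 / 12 * ∫ x, |deriv (deriv g) x| := by
  have hg1c : ContDiff ℝ 1 g := hg.of_le one_le_two
  have hcdd : Continuous (deriv (deriv g)) := deriv2_continuous hg
  have sg : Summable (fun l : ℤ => g ((l:ℝ)*Δx)) := summable_samples hΔx hg1c hg0 hg1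
  have sg' : Summable (fun l : ℤ => deriv g ((l:ℝ)*Δx)) :=
    summable_samples hΔx (deriv_contDiff hg) hg1 hg2
  -- shift machinery
  have hcast : ∀ (f : ℝ → ℝ) (l : ℤ), f (((l:ℝ)+1)*Δx) = (fun l : ℤ => f ((l:ℝ)*Δx)) ((Equiv.addRight (1:ℤ)) l) := by
    intro f l
    simp only [Equiv.coe_addRight]
    push_cast
    ring_nf
  have shiftSummable : ∀ (f : ℝ → ℝ), Summable (fun l : ℤ => f ((l:ℝ)*Δx)) →
      Summable (fun l : ℤ => f (((l:ℝ)+1)*Δx)) := by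
    intro f hf
    have heq : (fun l : ℤ => f (((l:ℝ)+1)*Δx))
        = ((fun l : ℤ => f ((l:ℝ)*Δx)) ∘ (Equiv.addRight (1:ℤ))) :=
      funext (hcast f)
    rw [heq]
    exact ((Equiv.addRight (1:ℤ)).summable_iff (f := fun l : ℤ => f ((l:ℝ)*Δx))).mpr hf
  have shiftTsum : ∀ (f : ℝ → ℝ),
      ∑' l : ℤ, f (((l:ℝ)+1)*Δx) = ∑' l : ℤ, f ((l:ℝ)*Δx) := by
    intro f
    have heq : ∀ l : ℤ, f (((l:ℝ)+1)*Δx)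
        = (fun l : ℤ => f ((l:ℝ)*Δx)) ((Equiv.addRight (1:ℤ)) l) := hcast f
    rw [tsum_congr heq]
    exact (Equiv.addRight (1:ℤ)).tsum_eq (fun l : ℤ => f ((l:ℝ)*Δx))
  -- main sums
  have sA : HasSum (fun l : ℤ => ∫ x in Set.Ioc ((l:ℝ)*Δx) (((l:ℝ)+1)*Δx), g x) (∫ x, g x) :=
    hasSum_setInt hΔx hg0
  have sB : HasSum (fun l : ℤ => ∫ x in Set.Ioc ((l:ℝ)*Δx) (((l:ℝ)+1)*Δx), |deriv (deriv g) x|)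
      (∫ x, |deriv (deriv g) x|) := hasSum_setInt hΔx hg2.abs
  set T := ∑' l : ℤ, g ((l:ℝ)*Δx) with hT
  set E : ℤ → ℝ := fun l => ∫ x in (l:ℝ)*Δx..((l:ℝ)+1)*Δx,
      ((x - (l:ℝ)*Δx)*(x - ((l:ℝ)+1)*Δx)/2 + Δx^2/12) * deriv (deriv g) x with hE
  have hab : ∀ l : ℤ, (l:ℝ)*Δx ≤ ((l:ℝ)+1)*Δx := by
    intro l; nlinarith [hΔx]
  -- per-interval identity
  have hper : ∀ l : ℤ, (∫ x in Set.Ioc ((l:ℝ)*Δx) (((l:ℝ)+1)*Δx), g x)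
      = E l - Δx^2/12 * (deriv g (((l:ℝ)+1)*Δx) - deriv g ((l:ℝ)*Δx))
        + Δx/2 * (g (((l:ℝ)+1)*Δx) + g ((l:ℝ)*Δx)) := by
    intro l
    have hba : ((l:ℝ)+1)*Δx - (l:ℝ)*Δx = Δx := by ring
    have key := ibp_kernel g hg ((l:ℝ)*Δx) (((l:ℝ)+1)*Δx)
    rw [hba] at key
    rw [← intervalIntegral.integral_of_le (hab l)]
    rw [hE]
    linarith [key]
  -- summability of E
  have sE : Summable E := by
    have : E = fun l : ℤ => (∫ x in Set.Ioc ((l:ℝ)*Δx) (((l:ℝ)+1)*Δx), g x)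
        + Δx^2/12 * (deriv g (((l:ℝ)+1)*Δx) - deriv g ((l:ℝ)*Δx))
        - Δx/2 * (g (((l:ℝ)+1)*Δx) + g ((l:ℝ)*Δx)) := by
      funext l; rw [hper l]; ring
    rw [this]
    exact ((sA.summable.add (((shiftSummable _ sg').sub sg').mul_left _)).sub
      (((shiftSummable _ sg).add sg).mul_left _))
  -- the key identity : ∫ g = ∑' E + Δx * T
  have hint : ∫ x, g x = (∑' l, E l) + Δx * T := by
    have hs : HasSum (fun l : ℤ => E l - Δx^2/12 * (deriv g (((l:ℝ)+1)*Δx) - deriv g ((l:ℝ)*Δx))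
        + Δx/2 * (g (((l:ℝ)+1)*Δx) + g ((l:ℝ)*Δx)))
        ((∑' l, E l) - Δx^2/12 * ((∑' l : ℤ, deriv g (((l:ℝ)+1)*Δx)) - ∑' l : ℤ, deriv g ((l:ℝ)*Δx))
        + Δx/2 * ((∑' l : ℤ, g (((l:ℝ)+1)*Δx)) + ∑' l : ℤ, g ((l:ℝ)*Δx))) := by
      exact (sE.hasSum.sub (((shiftSummable _ sg').hasSum.sub sg'.hasSum).mul_left _)).add
        (((shiftSummable _ sg).hasSum.add sg.hasSum).mul_left _)
    rw [shiftTsum (deriv g), shiftTsum g] at hs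
    have hval : (∑' l, E l) - Δx^2/12 * ((∑' l : ℤ, deriv g ((l:ℝ)*Δx)) - ∑' l : ℤ, deriv g ((l:ℝ)*Δx))
        + Δx/2 * ((∑' l : ℤ, g ((l:ℝ)*Δx)) + ∑' l : ℤ, g ((l:ℝ)*Δx))
        = (∑' l, E l) + Δx * T := by rw [← hT]; ring
    rw [hval] at hs
    have hfun : (fun l : ℤ => E l - Δx^2/12 * (deriv g (((l:ℝ)+1)*Δx) - deriv g ((l:ℝ)*Δx))
        + Δx/2 * (g (((l:ℝ)+1)*Δx) + g ((l:ℝ)*Δx)))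
        = fun l : ℤ => ∫ x in Set.Ioc ((l:ℝ)*Δx) (((l:ℝ)+1)*Δx), g x := by
      funext l; rw [hper l]
    rw [hfun] at hs
    exact sA.unique hs
  -- reduce to |∑' E|
  have hgoal : T * Δx - ∫ x, g x = -(∑' l, E l) := by rw [hint]; ring
  rw [hgoal, abs_neg]
  -- per-interval bound
  have hElb : ∀ l : ℤ, |E l| ≤ Δx^2/12 * ∫ x in Set.Ioc ((l:ℝ)*Δx) (((l:ℝ)+1)*Δx), |deriv (deriv g) x| := by
    intro l
    set a := (l:ℝ)*Δx with ha
    set b := ((l:ℝ)+1)*Δx with hb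
    have hba : b - a = Δx := by rw [ha, hb]; ring
    have hab' : a ≤ b := hab l
    have hcontP : Continuous (fun x : ℝ => (x - a)*(x - b)/2 + Δx^2/12) := by continuity
    have step1 : |E l| ≤ ∫ x in a..b, |((x - a)*(x - b)/2 + Δx^2/12) * deriv (deriv g) x| := by
      rw [hE]
      exact intervalIntegral.abs_integral_le_integral_abs hab'
    have step2 : (∫ x in a..b, |((x - a)*(x - b)/2 + Δx^2/12) * deriv (deriv g) x|)
        ≤ ∫ x in a..b, Δx^2/12 * |deriv (deriv g) x| := by
      apply intervalIntegral.integral_mono_on hab'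
      · exact ((hcontP.mul hcdd).abs).intervalIntegrable a b
      · exact ((continuous_const.mul hcdd.abs)).intervalIntegrable a b
      · intro x hx
        rw [abs_mul]
        apply mul_le_mul_of_nonneg_right _ (abs_nonneg _)
        have h1 : a ≤ x := hx.1
        have h2 : x ≤ b := hx.2
        rw [abs_le]
        constructor
        · nlinarith [sq_nonneg (x - a - (b - x)), hba, hΔx]
        · nlinarith [hba, hΔx]
    have step3 : (∫ x in a..b, Δx^2/12 * |deriv (deriv g) x|)
        = Δx^2/12 * ∫ x in Set.Ioc a b, |deriv (deriv g) x| := by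
      rw [intervalIntegral.integral_const_mul, intervalIntegral.integral_of_le hab']
    linarith [step1, step2, step3.le, step3.ge]
  have sAbs : Summable (fun l : ℤ => |E l|) :=
    (sB.summable.mul_left (Δx^2/12)).of_nonneg_of_le (fun l => abs_nonneg _) hElb
  calc |∑' l, E l| ≤ ∑' l, |E l| := by
        have hn : Summable (fun l : ℤ => ‖E l‖) := by
          simpa only [Real.norm_eq_abs] using sAbs
        simpa only [Real.norm_eq_abs] using norm_tsum_le_tsum_norm hn
  _ ≤ ∑' l : ℤ, Δx^2/12 * ∫ x in Set.Ioc ((l:ℝ)*Δx) (((l:ℝ)+1)*Δx), |deriv (deriv g) x| :=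
        Summable.tsum_le_tsum hElb sAbs (sB.summable.mul_left _)
  _ = Δx^2/12 * ∫ x, |deriv (deriv g) x| := by rw [tsum_mul_left, sB.tsum_eq]
end

section
/- Let Δx > 0, X₀ ∈ ℝ and let g ∈ C²(ℝ) with g, g', g'' ∈ L²(ℝ). Then Σ_{i∈ℤ} g(X₀ + iΔx)² Δx ≤ ‖g‖²_{L²(ℝ)} + (Δx²/6)( ‖g'‖²_{L²(ℝ)} + ‖g‖_{L²(ℝ)}·‖g''‖_{L²(ℝ)} ). -/
open MeasureTheory
open scoped ENNReal NNReal
set_option maxHeartbeats 1000000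

lemma aux_mul_int {u v : ℝ → ℝ} (hu : MemLp u 2 (volume : Measure ℝ))
    (hv : MemLp v 2 (volume : Measure ℝ)) : Integrable (fun t => u t * v t) := by
  have h : (1:ℝ≥0∞)/1 = 1/2 + 1/2 := by
    rw [one_div_one, one_div, ENNReal.inv_two_add_inv_two]
  have h2 := hv.smul hu (r := 1)
  rw [memLp_one_iff_integrable] at h2
  exact h2

lemma aux_cs {u v : ℝ → ℝ} (hu : MemLp u 2 (volume : Measure ℝ))
    (hv : MemLp v 2 (volume : Measure ℝ)) :
    (∫ t, |u t * v t|) ≤ Real.sqrt (∫ t, u t ^ 2) * Real.sqrt (∫ t, v t ^ 2) := by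
  have hpq : Real.HolderConjugate 2 2 := Real.HolderConjugate.two_two
  have h2 : ENNReal.ofReal (2:ℝ) = 2 := by norm_num
  have hu' : MemLp (fun t => |u t|) (ENNReal.ofReal (2:ℝ)) (volume : Measure ℝ) := by
    rw [h2]; simpa [Real.norm_eq_abs] using hu.norm
  have hv' : MemLp (fun t => |v t|) (ENNReal.ofReal (2:ℝ)) (volume : Measure ℝ) := by
    rw [h2]; simpa [Real.norm_eq_abs] using hv.norm
  have key := integral_mul_le_Lp_mul_Lq_of_nonneg hpq
    (Filter.Eventually.of_forall fun t => abs_nonneg (u t))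
    (Filter.Eventually.of_forall fun t => abs_nonneg (v t)) hu' hv'
  have eu : (fun t => |u t| ^ (2:ℝ)) = fun t => u t ^ 2 := by
    funext t
    rw [show ((2:ℝ)) = ((2:ℕ):ℝ) by norm_num, Real.rpow_natCast, sq_abs]
  have ev : (fun t => |v t| ^ (2:ℝ)) = fun t => v t ^ 2 := by
    funext t
    rw [show ((2:ℝ)) = ((2:ℕ):ℝ) by norm_num, Real.rpow_natCast, sq_abs]
  have el : (fun t => |u t * v t|) = fun t => |u t| * |v t| := by
    funext t; exact abs_mul _ _
  rw [el]
  calc (∫ t, |u t| * |v t|)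
      ≤ (∫ t, |u t| ^ (2:ℝ)) ^ (1/(2:ℝ)) * (∫ t, |v t| ^ (2:ℝ)) ^ (1/(2:ℝ)) := key
    _ = Real.sqrt (∫ t, u t ^ 2) * Real.sqrt (∫ t, v t ^ 2) := by
        rw [eu, ev, Real.sqrt_eq_rpow, Real.sqrt_eq_rpow]

lemma kernel_bound {a t D : ℝ} (h1 : a < t) (h2 : t ≤ a + D) :
    0 ≤ (t - a) * (a + D - t) / 2 ∧ (t - a) * (a + D - t) / 2 ≤ D^2/8 := by
  constructor
  · apply div_nonneg _ (by norm_num)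
    apply mul_nonneg <;> linarith
  · nlinarith [sq_nonneg (2*(t - a) - D)]

lemma key_interval (g : ℝ → ℝ) (hgd : Differentiable ℝ g)
    (hg'd : Differentiable ℝ (deriv g)) (hg'c : Continuous (deriv g))
    (hg''c : Continuous (deriv (deriv g))) (a b : ℝ) (hab : a ≤ b) :
    (∫ t in Set.Ioc a b, (g t ^ 2 + (t - a) * (b - t) / 2 *
        (2 * (deriv g t)^2 + 2 * (g t * deriv (deriv g) t)))) =
      (b - a)/2 * (g b ^ 2 + g a ^ 2) := by
  have hgc : Continuous g := hgd.continuous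
  have hcont : Continuous (fun t => g t ^ 2 + (t - a) * (b - t) / 2 *
      (2 * (deriv g t)^2 + 2 * (g t * deriv (deriv g) t))) := by
    apply (hgc.pow 2).add
    exact ((((continuous_id.sub continuous_const).mul
      (continuous_const.sub continuous_id)).div_const 2).mul
      ((continuous_const.mul (hg'c.pow 2)).add (continuous_const.mul (hgc.mul hg''c))))
  have hderiv : ∀ t ∈ Set.uIcc a b,
      HasDerivAt (fun t => (t - (a+b)/2) * g t ^ 2 + (t - a) * (b - t) / 2 *
          (2 * (g t * deriv g t)))
        (g t ^ 2 + (t - a) * (b - t) / 2 *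
          (2 * (deriv g t)^2 + 2 * (g t * deriv (deriv g) t))) t := by
    intro t _
    have h1 : HasDerivAt g (deriv g t) t := (hgd t).hasDerivAt
    have h2 : HasDerivAt (deriv g) (deriv (deriv g) t) t := (hg'd t).hasDerivAt
    have total := (((hasDerivAt_id t).sub_const ((a+b)/2)).mul (h1.pow 2)).add
      (((((hasDerivAt_id t).sub_const a).mul
          ((hasDerivAt_const t b).sub (hasDerivAt_id t))).div_const 2).mul
        ((h1.mul h2).const_mul 2))
    refine total.congr_deriv ?_
    norm_num
    ring
  rw [← intervalIntegral.integral_of_le hab,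
    intervalIntegral.integral_eq_sub_of_hasDerivAt hderiv
      (hcont.intervalIntegrable a b)]
  ring

theorem stmt_16 (Δx X₀ : ℝ) (hΔx : 0 < Δx) (g : ℝ → ℝ)
    (hg : ContDiff ℝ 2 g)
    (hg0 : Integrable (fun x => g x ^ 2)) (hg1 : Integrable (fun x => deriv g x ^ 2))
    (hg2 : Integrable (fun x => deriv (deriv g) x ^ 2)) :
    (∑' i : ℤ, g (X₀ + (i : ℝ) * Δx) ^ 2) * Δx ≤
      (∫ x, g x ^ 2) + Δx ^ 2 / 6 *
        ((∫ x, deriv g x ^ 2) +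
          Real.sqrt (∫ x, g x ^ 2) * Real.sqrt (∫ x, deriv (deriv g) x ^ 2)) := by
  -- regularity
  have hgd : Differentiable ℝ g := hg.differentiable (by norm_num)
  have hgc : Continuous g := hgd.continuous
  have hg2' : ContDiff ℝ (1 + 1) g := by
    have h21 : ((2 : WithTop ℕ∞)) = 1 + 1 := by norm_num
    rwa [h21] at hg
  have hgder : ContDiff ℝ 1 (deriv g) := (contDiff_succ_iff_deriv.mp hg2').2.2
  have hg'd : Differentiable ℝ (deriv g) := hgder.differentiable (by norm_num)
  have hg'c : Continuous (deriv g) := hg'd.continuous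
  have hg''c : Continuous (deriv (deriv g)) := hgder.continuous_deriv le_rfl
  -- integrability
  have Hg : MemLp g 2 (volume : Measure ℝ) :=
    (memLp_two_iff_integrable_sq hgc.aestronglyMeasurable).2 hg0
  have Hg' : MemLp (deriv g) 2 (volume : Measure ℝ) :=
    (memLp_two_iff_integrable_sq hg'c.aestronglyMeasurable).2 hg1
  have Hg'' : MemLp (deriv (deriv g)) 2 (volume : Measure ℝ) :=
    (memLp_two_iff_integrable_sq hg''c.aestronglyMeasurable).2 hg2
  have I1 : Integrable (fun t => g t * deriv g t) := aux_mul_int Hg Hg'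
  have I2 : Integrable (fun t => g t * deriv (deriv g) t) := aux_mul_int Hg Hg''
  set ftwo : ℝ → ℝ := fun t => 2 * (deriv g t)^2 + 2 * (g t * deriv (deriv g) t) with hftwo
  have ftwoc : Continuous ftwo := (continuous_const.mul (hg'c.pow 2)).add (continuous_const.mul (hgc.mul hg''c))
  have Iftwo : Integrable ftwo := (hg1.const_mul 2).add (I2.const_mul 2)
  have hzero : (∫ t, ftwo t) = 0 := by
    have hd : ∀ t, HasDerivAt (fun t => 2 * (g t * deriv g t)) (ftwo t) t := by
      intro t
      have := (((hgd t).hasDerivAt.mul (hg'd t).hasDerivAt).const_mul 2)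
      refine this.congr_deriv ?_
      simp only [hftwo]; ring
    exact integral_eq_zero_of_hasDerivAt_of_integrable hd Iftwo (I1.const_mul 2)
  -- grid
  set x : ℤ → ℝ := fun i => X₀ + (i : ℝ) * Δx with hx
  set s : ℤ → Set ℝ := fun i => Set.Ioc (x i) (x (i+1)) with hs
  have hb : ∀ i : ℤ, x (i+1) = x i + Δx := by
    intro i; simp only [hx]; push_cast; ring
  have hmono : StrictMono x := by
    intro i j hij
    simp only [hx]
    have : (i:ℝ) < j := by exact_mod_cast hij
    nlinarith
  have hd : Pairwise (Function.onFun Disjoint s) := by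
    intro i j hij
    rcases hij.lt_or_gt with h | h
    · refine Set.Ioc_disjoint_Ioc.2 ?_
      exact le_trans (min_le_left _ _) (le_trans (hmono.monotone (by omega)) (le_max_right _ _))
    · refine Set.Ioc_disjoint_Ioc.2 ?_
      exact le_trans (min_le_right _ _) (le_trans (hmono.monotone (by omega)) (le_max_left _ _))
  have hU : (⋃ i : ℤ, s i) = Set.univ := by
    ext t
    simp only [Set.mem_iUnion, Set.mem_univ, iff_true, hs, Set.mem_Ioc]
    refine ⟨⌈(t - X₀)/Δx⌉ - 1, ?_, ?_⟩
    · have h1 : (⌈(t - X₀)/Δx⌉:ℝ) - 1 < (t - X₀)/Δx := by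
        have := Int.ceil_lt_add_one ((t - X₀)/Δx); linarith
      have h2 := mul_lt_mul_of_pos_right h1 hΔx
      rw [div_mul_cancel₀ _ (ne_of_gt hΔx)] at h2
      simp only [hx]; push_cast; linarith
    · have h1 : (t - X₀)/Δx ≤ (⌈(t - X₀)/Δx⌉:ℝ) := Int.le_ceil _
      have h2 := mul_le_mul_of_nonneg_right h1 hΔx.le
      rw [div_mul_cancel₀ _ (ne_of_gt hΔx)] at h2
      simp only [hx]; push_cast; linarith
  have hmeas : ∀ i : ℤ, MeasurableSet (s i) := fun i => measurableSet_Ioc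
  -- kernel
  set K : ℤ → ℝ → ℝ := fun i t => (t - x i) * (x (i+1) - t) / 2 with hK
  have hKbound : ∀ i : ℤ, ∀ t ∈ s i, 0 ≤ K i t ∧ K i t ≤ Δx^2/8 := by
    intro i t ht
    simp only [hs, Set.mem_Ioc] at ht
    have hbi := hb i
    have ht2 : t ≤ x i + Δx := by rw [← hbi]; exact ht.2
    simp only [hK]
    rw [hbi]
    exact kernel_bound ht.1 ht2
  -- per-interval identity
  have key : ∀ i : ℤ, (∫ t in s i, (g t ^ 2 + K i t * ftwo t)) =
      Δx/2 * (g (x (i+1)) ^ 2 + g (x i) ^ 2) := by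
    intro i
    have h := key_interval g hgd hg'd hg'c hg''c (x i) (x (i+1))
      (hmono.monotone (by omega))
    simp only [hs, hK, hftwo]
    rw [h, hb i]
    ring_nf
  -- integrability on pieces
  have hIK : ∀ i : ℤ, IntegrableOn (fun t => K i t * ftwo t) (s i) := by
    intro i
    apply Continuous.integrableOn_Ioc
    exact (((continuous_id.sub continuous_const).mul
      (continuous_const.sub continuous_id)).div_const 2).mul ftwoc
  have keysplit : ∀ i : ℤ, (∫ t in s i, g t ^ 2) + (∫ t in s i, K i t * ftwo t) =
      Δx/2 * (g (x (i+1)) ^ 2 + g (x i) ^ 2) := by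
    intro i
    rw [← integral_add hg0.integrableOn (hIK i)]
    exact key i
  -- piece sums
  have hA : HasSum (fun i : ℤ => ∫ t in s i, g t ^ 2) (∫ t, g t ^ 2) := by
    have := hasSum_integral_iUnion hmeas hd (by rw [hU]; exact hg0.integrableOn)
    rwa [hU, setIntegral_univ] at this
  have hM : HasSum (fun i : ℤ => ∫ t in s i, |ftwo t|) (∫ t, |ftwo t|) := by
    have := hasSum_integral_iUnion hmeas hd (f := fun t => |ftwo t|)
      (by rw [hU]; exact Iftwo.abs.integrableOn)
    rwa [hU, setIntegral_univ] at this
  have hC : HasSum (fun i : ℤ => ∫ t in s i, ftwo t) 0 := by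
    have := hasSum_integral_iUnion hmeas hd (f := ftwo)
      (by rw [hU]; exact Iftwo.integrableOn)
    rwa [hU, setIntegral_univ, hzero] at this
  -- bound on k i
  have kbound : ∀ i : ℤ, (∫ t in s i, K i t * ftwo t) ≤ Δx^2/8 * ∫ t in s i, |ftwo t| := by
    intro i
    rw [← integral_const_mul]
    apply setIntegral_mono_on (hIK i)
      ((Iftwo.abs.const_mul (Δx^2/8)).integrableOn) (hmeas i)
    intro t ht
    obtain ⟨hK0, hK8⟩ := hKbound i t ht
    calc K i t * ftwo t ≤ K i t * |ftwo t| :=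
          mul_le_mul_of_nonneg_left (le_abs_self _) hK0
      _ ≤ Δx^2/8 * |ftwo t| := mul_le_mul_of_nonneg_right hK8 (abs_nonneg _)
  -- summability of the grid values
  have hsummable : Summable (fun i : ℤ => g (x i) ^ 2) := by
    apply Summable.of_nonneg_of_le (fun i => sq_nonneg _)
      (f := fun i => (2/Δx) * ((∫ t in s i, g t ^ 2) + Δx^2/8 * ∫ t in s i, |ftwo t|))
    · intro i
      have h1 := keysplit i
      have h2 := kbound i
      have h3 : Δx/2 * (g (x (i+1)) ^ 2 + g (x i) ^ 2) ≤
          (∫ t in s i, g t ^ 2) + Δx^2/8 * ∫ t in s i, |ftwo t| := by linarith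
      have h4 : g (x i) ^ 2 ≤ (2/Δx) * (Δx/2 * (g (x (i+1)) ^ 2 + g (x i) ^ 2)) := by
        have : (2/Δx) * (Δx/2 * (g (x (i+1)) ^ 2 + g (x i) ^ 2)) =
            g (x (i+1)) ^ 2 + g (x i) ^ 2 := by field_simp
        rw [this]
        nlinarith [sq_nonneg (g (x (i+1)))]
      calc g (x i) ^ 2 ≤ (2/Δx) * (Δx/2 * (g (x (i+1)) ^ 2 + g (x i) ^ 2)) := h4
        _ ≤ (2/Δx) * ((∫ t in s i, g t ^ 2) + Δx^2/8 * ∫ t in s i, |ftwo t|) := by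
            apply mul_le_mul_of_nonneg_left h3 (by positivity)
    · exact ((hA.summable.add (hM.summable.mul_left (Δx^2/8))).mul_left (2/Δx))
  set S : ℝ := ∑' i : ℤ, g (x i) ^ 2 with hS_def
  have hS : HasSum (fun i : ℤ => g (x i) ^ 2) S := hsummable.hasSum
  have hS' : HasSum (fun i : ℤ => g (x (i+1)) ^ 2) S :=
    ((Equiv.addRight (1:ℤ)).hasSum_iff).2 hS
  have htrap : HasSum (fun i : ℤ => Δx/2 * (g (x (i+1)) ^ 2 + g (x i) ^ 2))
      (Δx/2 * (S + S)) := (hS'.add hS).mul_left _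
  have hk : HasSum (fun i : ℤ => ∫ t in s i, K i t * ftwo t)
      (Δx/2 * (S + S) - ∫ t, g t ^ 2) := by
    have h := htrap.sub hA
    have e : (fun i : ℤ => Δx/2 * (g (x (i+1)) ^ 2 + g (x i) ^ 2) - ∫ t in s i, g t ^ 2)
        = fun i : ℤ => ∫ t in s i, K i t * ftwo t := by
      funext i
      have := keysplit i
      linarith
    rwa [e] at h
  -- shifted kernel
  have hri : ∀ i : ℤ, (∫ t in s i, (K i t - Δx^2/12) * ftwo t) =
      (∫ t in s i, K i t * ftwo t) - Δx^2/12 * ∫ t in s i, ftwo t := by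
    intro i
    rw [← integral_const_mul, ← integral_sub (hIK i) ((Iftwo.const_mul (Δx^2/12)).integrableOn)]
    apply integral_congr_ae
    exact Filter.Eventually.of_forall fun t => by ring
  have hr : HasSum (fun i : ℤ => ∫ t in s i, (K i t - Δx^2/12) * ftwo t)
      ((Δx/2 * (S + S) - ∫ t, g t ^ 2) - Δx^2/12 * 0) := by
    have h := hk.sub (hC.mul_left (Δx^2/12))
    have e : (fun i : ℤ => (∫ t in s i, K i t * ftwo t) - Δx^2/12 * ∫ t in s i, ftwo t)
        = fun i : ℤ => ∫ t in s i, (K i t - Δx^2/12) * ftwo t := by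
      funext i; rw [hri i]
    rwa [e] at h
  have hw : HasSum (fun i : ℤ => ∫ t in s i,
        (Δx^2/12 * (deriv g t)^2 + Δx^2/6 * |g t * deriv (deriv g) t|))
      ((∫ t, (Δx^2/12 * (deriv g t)^2 + Δx^2/6 * |g t * deriv (deriv g) t|))) := by
    have := hasSum_integral_iUnion hmeas hd
      (f := fun t => Δx^2/12 * (deriv g t)^2 + Δx^2/6 * |g t * deriv (deriv g) t|)
      (by rw [hU]; exact ((hg1.const_mul _).add ((I2.abs).const_mul _)).integrableOn)
    rwa [hU, setIntegral_univ] at this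
  -- termwise comparison
  have hterm : ∀ i : ℤ, (∫ t in s i, (K i t - Δx^2/12) * ftwo t) ≤
      ∫ t in s i, (Δx^2/12 * (deriv g t)^2 + Δx^2/6 * |g t * deriv (deriv g) t|) := by
    intro i
    have hint1 : IntegrableOn (fun t => (K i t - Δx^2/12) * ftwo t) (s i) := by
      apply Continuous.integrableOn_Ioc
      exact (((((continuous_id.sub continuous_const).mul
        (continuous_const.sub continuous_id)).div_const 2)).sub continuous_const).mul ftwoc
    apply setIntegral_mono_on hint1
      (((hg1.const_mul _).add ((I2.abs).const_mul _)).integrableOn) (hmeas i)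
    intro t ht
    obtain ⟨hK0, hK8⟩ := hKbound i t ht
    have habs : |K i t - Δx^2/12| ≤ Δx^2/12 := by
      rw [abs_le]
      constructor <;> nlinarith [sq_nonneg Δx]
    have p1 : (K i t - Δx^2/12) * (2 * (deriv g t)^2) ≤ Δx^2/24 * (2 * (deriv g t)^2) := by
      apply mul_le_mul_of_nonneg_right (by nlinarith [sq_nonneg Δx]) (by positivity)
    have p2 : (K i t - Δx^2/12) * (2 * (g t * deriv (deriv g) t)) ≤
        Δx^2/12 * (2 * |g t * deriv (deriv g) t|) := by
      calc (K i t - Δx^2/12) * (2 * (g t * deriv (deriv g) t))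
          ≤ |(K i t - Δx^2/12) * (2 * (g t * deriv (deriv g) t))| := le_abs_self _
        _ = |K i t - Δx^2/12| * (2 * |g t * deriv (deriv g) t|) := by
            rw [abs_mul, abs_mul]; norm_num
        _ ≤ Δx^2/12 * (2 * |g t * deriv (deriv g) t|) := by
            apply mul_le_mul_of_nonneg_right habs (by positivity)
    have expand : (K i t - Δx^2/12) * ftwo t =
        (K i t - Δx^2/12) * (2 * (deriv g t)^2) +
        (K i t - Δx^2/12) * (2 * (g t * deriv (deriv g) t)) := by
      simp only [hftwo]; ring
    rw [expand]
    have heq : Δx^2/24 * (2 * (deriv g t)^2) + Δx^2/12 * (2 * |g t * deriv (deriv g) t|) =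
        Δx^2/12 * (deriv g t)^2 + Δx^2/6 * |g t * deriv (deriv g) t| := by ring
    exact le_of_le_of_eq (add_le_add p1 p2) heq
  have main := hasSum_le hterm hr hw
  -- evaluate W
  have Wval : (∫ t, (Δx^2/12 * (deriv g t)^2 + Δx^2/6 * |g t * deriv (deriv g) t|)) =
      Δx^2/12 * (∫ t, (deriv g t)^2) + Δx^2/6 * ∫ t, |g t * deriv (deriv g) t| := by
    rw [integral_add (hg1.const_mul _) ((I2.abs).const_mul _), integral_const_mul,
      integral_const_mul]
  have hcs : (∫ t, |g t * deriv (deriv g) t|) ≤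
      Real.sqrt (∫ t, g t ^ 2) * Real.sqrt (∫ t, deriv (deriv g) t ^ 2) := aux_cs Hg Hg''
  have hB : (0:ℝ) ≤ ∫ t, (deriv g t)^2 := integral_nonneg fun t => sq_nonneg _
  have hD : (0:ℝ) ≤ ∫ t, |g t * deriv (deriv g) t| :=
    integral_nonneg fun t => abs_nonneg _
  rw [Wval] at main
  have step1 : Δx^2/6 * (∫ t, |g t * deriv (deriv g) t|) ≤
      Δx^2/6 * (Real.sqrt (∫ t, g t ^ 2) * Real.sqrt (∫ t, deriv (deriv g) t ^ 2)) :=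
    mul_le_mul_of_nonneg_left hcs (by positivity)
  have step2 : Δx^2/12 * (∫ t, (deriv g t)^2) ≤ Δx^2/6 * (∫ t, (deriv g t)^2) := by
    nlinarith [sq_nonneg Δx]
  -- conclude
  show S * Δx ≤ _
  nlinarith [main, step1, step2]
end

section
/- Let h > 0, Δx > 0, let α, β ∈ ℝ with β ≥ 0, and let ν̃ : ℝ → [0,∞) be such that S := Σ_{l∈ℤ} ν̃(lΔx)Δx < ∞. Define linear operators A and B on l₂(ℤ) by (Av)_i = (α−β)v_{i−1} + (1+2β)v_i − (α+β)v_{i+1} and (Bv)_i = v_i + hΔx Σ_{l∈ℤ} ν̃(lΔx)(v_{i+l} − v_i). Then A is a bounded bijection of l₂(ℤ) whose inverse satisfies |A^{−1}|₂ ≤ 1, and |B|₂ ≤ 1 + 2Sh. -/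
open scoped ENNReal
open RealInnerProductSpace

noncomputable section

namespace Stmt18Aux

abbrev H : Type := lp (fun _ : ℤ => ℝ) 2

lemma htwo : (0:ℝ) < (2:ℝ≥0∞).toReal := by norm_num

lemma mem_shift (k : ℤ) (v : H) : Memℓp (fun i : ℤ => v (i + k)) 2 := by
  rw [memℓp_gen_iff htwo]
  have h := (memℓp_gen_iff htwo).1 (lp.memℓp v)
  exact ((Equiv.addRight k).summable_iff
    (f := fun j : ℤ => ‖v j‖ ^ (2:ℝ≥0∞).toReal)).2 h

/-- shift by `k`: `(shift k v) i = v (i + k)`, an isometric equivalence of `l²(ℤ)`. -/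
def shift (k : ℤ) : H ≃ₗᵢ[ℝ] H where
  toLinearEquiv :=
  { toFun := fun v => ⟨fun i => v (i + k), mem_shift k v⟩
    map_add' := fun u v => by
      apply lp.ext; funext i
      simp [lp.coeFn_add]
      rfl
    map_smul' := fun c v => by
      apply lp.ext; funext i
      simp [lp.coeFn_smul]
    invFun := fun v => ⟨fun i => v (i + -k), mem_shift (-k) v⟩
    left_inv := fun v => by
      apply lp.ext; funext i
      show v (i + -k + k) = v i
      rw [show i + -k + k = i by ring]
    right_inv := fun v => by
      apply lp.ext; funext i
      show v (i + k + -k) = v i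
      rw [show i + k + -k = i by ring] }
  norm_map' := fun v => by
    have h1 := lp.norm_rpow_eq_tsum htwo (⟨fun i : ℤ => v (i + k), mem_shift k v⟩ : H)
    have h2 := lp.norm_rpow_eq_tsum htwo v
    have h3 : ∑' i : ℤ, ‖v (i + k)‖ ^ (2:ℝ≥0∞).toReal
        = ∑' i : ℤ, ‖v i‖ ^ (2:ℝ≥0∞).toReal :=
      (Equiv.addRight k).tsum_eq (fun j : ℤ => ‖v j‖ ^ (2:ℝ≥0∞).toReal)
    have key : ‖(⟨fun i : ℤ => v (i + k), mem_shift k v⟩ : H)‖ ^ (2:ℝ≥0∞).toReal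
        = ‖v‖ ^ (2:ℝ≥0∞).toReal := by rw [h1, h2]; exact h3
    have ht : (2:ℝ≥0∞).toReal = (2:ℝ) := by norm_num
    rw [ht] at key
    have := Real.rpow_natCast (‖(⟨fun i : ℤ => v (i + k), mem_shift k v⟩ : H)‖) 2
    have := Real.rpow_natCast ‖v‖ 2
    have key2 : ‖(⟨fun i : ℤ => v (i + k), mem_shift k v⟩ : H)‖ ^ (2:ℕ)
        = ‖v‖ ^ (2:ℕ) := by
      have a1 := Real.rpow_natCast (‖(⟨fun i : ℤ => v (i + k), mem_shift k v⟩ : H)‖) 2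
      have a2 := Real.rpow_natCast ‖v‖ 2
      push_cast at a1 a2
      rw [← a1, ← a2]; exact key
    exact (pow_left_inj₀ (norm_nonneg _) (norm_nonneg _) two_ne_zero).1 key2

/-- shift as a continuous linear map. -/
def T (k : ℤ) : H →L[ℝ] H := ((shift k).toContinuousLinearEquiv : H →L[ℝ] H)

lemma T_apply (k : ℤ) (v : H) (i : ℤ) : T k v i = v (i + k) := rfl

lemma shift_apply (k : ℤ) (v : H) (i : ℤ) : shift k v i = v (i + k) := rfl

lemma norm_T_le (k : ℤ) : ‖T k‖ ≤ 1 :=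
  ContinuousLinearMap.opNorm_le_bound _ zero_le_one fun v => by
    rw [one_mul]
    exact ((shift k).norm_map v).le

lemma T_shift_inner (v : H) : ⟪T (-1) v, v⟫ = ⟪T 1 v, v⟫ := by
  have h1 : (shift 1) ((shift (-1)) v) = v := by
    apply lp.ext; funext i
    show (shift 1) ((shift (-1)) v) i = v i
    rw [shift_apply, shift_apply, show i + 1 + -1 = i by ring]
  calc ⟪T (-1) v, v⟫ = ⟪(shift 1) ((shift (-1)) v), (shift 1) v⟫ :=
      ((shift 1).inner_map_map _ _).symm
    _ = ⟪v, (shift 1) v⟫ := by rw [h1]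
    _ = ⟪T 1 v, v⟫ := real_inner_comm _ _

/-- the coordinate evaluation as a continuous linear map. -/
def coord (i : ℤ) : H →L[ℝ] ℝ :=
  LinearMap.mkContinuous
    { toFun := fun v => v i
      map_add' := fun u v => by simp [lp.coeFn_add]
      map_smul' := fun c v => by simp [lp.coeFn_smul] }
    1 (fun v => by
      rw [one_mul]
      exact lp.norm_apply_le_norm (by norm_num) v i)

lemma coord_apply (i : ℤ) (v : H) : coord i v = v i := rfl

end Stmt18Aux

open Stmt18Aux in
theorem stmt_18 (h Δx α β : ℝ) (hh : 0 < h) (hΔx : 0 < Δx) (hβ : 0 ≤ β)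
    (ν : ℝ → ℝ) (hν : ∀ x, 0 ≤ ν x)
    (hsum : Summable fun l : ℤ => ν ((l : ℝ) * Δx)) :
    ∃ A Ainv B : lp (fun _ : ℤ => ℝ) 2 →L[ℝ] lp (fun _ : ℤ => ℝ) 2,
      (∀ (v : lp (fun _ : ℤ => ℝ) 2) (i : ℤ),
        A v i = (α - β) * v (i - 1) + (1 + 2 * β) * v i - (α + β) * v (i + 1)) ∧
      (∀ v, Ainv (A v) = v) ∧ (∀ v, A (Ainv v) = v) ∧ ‖Ainv‖ ≤ 1 ∧
      (∀ (v : lp (fun _ : ℤ => ℝ) 2) (i : ℤ),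
        B v i = v i + h * Δx * ∑' l : ℤ, ν ((l : ℝ) * Δx) * (v (i + l) - v i)) ∧
      ‖B‖ ≤ 1 + 2 * ((∑' l : ℤ, ν ((l : ℝ) * Δx)) * Δx) * h := by
  classical
  -- the operator A
  set A : H →L[ℝ] H :=
    (α - β) • T (-1) + (1 + 2 * β) • ContinuousLinearMap.id ℝ H - (α + β) • T 1 with hA
  have hA_apply : ∀ (v : H) (i : ℤ),
      A v i = (α - β) * v (i - 1) + (1 + 2 * β) * v i - (α + β) * v (i + 1) := by
    intro v i
    have : A v = (α - β) • (T (-1) v) + (1 + 2*β) • v - (α + β) • (T 1 v) := by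
      simp [hA]
    rw [this, lp.coeFn_sub, lp.coeFn_add, lp.coeFn_smul, lp.coeFn_smul, lp.coeFn_smul]
    simp only [Pi.sub_apply, Pi.add_apply, Pi.smul_apply, smul_eq_mul]
    rw [T_apply, T_apply]
    norm_num [sub_eq_add_neg]
  -- coercivity
  have hcoer : ∀ v : H, ‖v‖ * ‖v‖ ≤ ⟪A v, v⟫ := by
    intro v
    have hAv : A v = (α - β) • (T (-1) v) + (1 + 2*β) • v - (α + β) • (T 1 v) := by
      simp [hA]
    have c_le : ⟪T 1 v, v⟫ ≤ ‖v‖ * ‖v‖ := by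
      have h1 := real_inner_le_norm (T 1 v) v
      have hn : ‖T 1 v‖ = ‖v‖ := (shift 1).norm_map v
      rw [hn] at h1
      exact h1
    rw [hAv, inner_sub_left, inner_add_left, real_inner_smul_left, real_inner_smul_left,
      real_inner_smul_left, T_shift_inner, real_inner_self_eq_norm_mul_norm]
    nlinarith [c_le]
  have coercive : IsCoercive ((innerSL ℝ (E := H)).comp A) := by
    refine ⟨1, one_pos, fun u => ?_⟩
    rw [one_mul]
    exact hcoer u
  set e := coercive.continuousLinearEquivOfBilin with he
  have hAe : ∀ v : H, e v = A v := by
    intro v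
    exact (coercive.unique_continuousLinearEquivOfBilin (fun w => rfl)).symm
  set Ainv : H →L[ℝ] H := (e.symm : H →L[ℝ] H) with hAinv
  have hleft : ∀ v : H, Ainv (A v) = v := by
    intro v
    show (e.symm : H →L[ℝ] H) (A v) = v
    rw [ContinuousLinearEquiv.coe_coe, ← hAe v]
    exact e.symm_apply_apply v
  have hright : ∀ v : H, A (Ainv v) = v := by
    intro v
    show A ((e.symm : H →L[ℝ] H) v) = v
    rw [ContinuousLinearEquiv.coe_coe, ← hAe (e.symm v)]
    exact e.apply_symm_apply v
  have hAnorm : ∀ v : H, ‖v‖ ≤ ‖A v‖ := by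
    intro v
    rcases eq_or_ne v 0 with rfl | hv
    · simp
    · have h1 : ‖v‖ * ‖v‖ ≤ ‖A v‖ * ‖v‖ := (hcoer v).trans (real_inner_le_norm _ _)
      have h2 : 0 < ‖v‖ := norm_pos_iff.2 hv
      exact le_of_mul_le_mul_right h1 h2
  have hAinvnorm : ‖Ainv‖ ≤ 1 := by
    refine ContinuousLinearMap.opNorm_le_bound _ zero_le_one fun w => ?_
    rw [one_mul]
    calc ‖Ainv w‖ ≤ ‖A (Ainv w)‖ := hAnorm _
      _ = ‖w‖ := by rw [hright]
  -- the operator B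
  set S : ℝ := ∑' l : ℤ, ν ((l : ℝ) * Δx) with hS
  have hS0 : 0 ≤ S := tsum_nonneg fun l => hν _
  set t : ℝ := h * Δx * S with ht
  have ht0 : 0 ≤ t := by positivity
  have hKsummand_norm : ∀ l : ℤ,
      ‖(h * Δx * ν ((l : ℝ) * Δx)) • T l‖ ≤ h * Δx * ν ((l : ℝ) * Δx) := by
    intro l
    have hc : (0:ℝ) ≤ h * Δx * ν ((l : ℝ) * Δx) := mul_nonneg (by positivity) (hν _)
    calc ‖(h * Δx * ν ((l : ℝ) * Δx)) • T l‖
        ≤ ‖h * Δx * ν ((l : ℝ) * Δx)‖ * ‖T l‖ :=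
          ContinuousLinearMap.opNorm_smul_le _ _
      _ ≤ ‖h * Δx * ν ((l : ℝ) * Δx)‖ * 1 := by
          gcongr
          exact norm_T_le l
      _ = h * Δx * ν ((l : ℝ) * Δx) := by rw [mul_one, Real.norm_of_nonneg hc]
  have hgsum : Summable fun l : ℤ => h * Δx * ν ((l : ℝ) * Δx) := by
    simpa [mul_assoc] using hsum.mul_left (h * Δx)
  have hKsummable : Summable fun l : ℤ => (h * Δx * ν ((l : ℝ) * Δx)) • T l :=
    Summable.of_norm_bounded hgsum hKsummand_norm
  set K : H →L[ℝ] H := ∑' l : ℤ, (h * Δx * ν ((l : ℝ) * Δx)) • T l with hK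
  set B : H →L[ℝ] H := (1 - t) • ContinuousLinearMap.id ℝ H + K with hB
  have hKv : ∀ v : H, K v = ∑' l : ℤ, (h * Δx * ν ((l : ℝ) * Δx)) • (T l v) := by
    intro v
    rw [hK]
    have := (ContinuousLinearMap.apply ℝ H v).map_tsum hKsummable
    simpa using this
  have hKvi : ∀ (v : H) (i : ℤ),
      K v i = ∑' l : ℤ, h * Δx * ν ((l : ℝ) * Δx) * v (i + l) := by
    intro v i
    rw [← coord_apply i (K v), hKv]
    have hsummand : Summable fun l : ℤ => (h * Δx * ν ((l : ℝ) * Δx)) • (T l v) := by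
      refine Summable.of_norm_bounded (hgsum.mul_right ‖v‖) fun l => ?_
      have hc : (0:ℝ) ≤ h * Δx * ν ((l : ℝ) * Δx) := mul_nonneg (by positivity) (hν _)
      calc ‖(h * Δx * ν ((l : ℝ) * Δx)) • (T l v)‖
          ≤ ‖h * Δx * ν ((l : ℝ) * Δx)‖ * ‖T l v‖ := norm_smul_le _ _
        _ = h * Δx * ν ((l : ℝ) * Δx) * ‖v‖ := by
            rw [Real.norm_of_nonneg hc, show ‖T l v‖ = ‖v‖ from (shift l).norm_map v]
    have := (coord i).map_tsum hsummand
    rw [this]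
    refine tsum_congr fun l => ?_
    rw [map_smul, coord_apply, T_apply, smul_eq_mul]
  have hvbdd : ∀ (v : H), Summable fun l : ℤ => ν ((l : ℝ) * Δx) * v (0 + l) := by
    intro v
    exact Summable.of_norm_bounded (hsum.mul_right ‖v‖) fun l => by
      rw [norm_mul, Real.norm_of_nonneg (hν _)]
      gcongr
      · exact hν _
      · exact lp.norm_apply_le_norm (by norm_num) v _
  have hvsum : ∀ (v : H) (i : ℤ), Summable fun l : ℤ => ν ((l : ℝ) * Δx) * v (i + l) := by
    intro v i
    exact Summable.of_norm_bounded (hsum.mul_right ‖v‖) fun l => by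
      rw [norm_mul, Real.norm_of_nonneg (hν _)]
      gcongr
      · exact hν _
      · exact lp.norm_apply_le_norm (by norm_num) v _
  have hB_apply : ∀ (v : H) (i : ℤ),
      B v i = v i + h * Δx * ∑' l : ℤ, ν ((l : ℝ) * Δx) * (v (i + l) - v i) := by
    intro v i
    have h1 : B v = (1 - t) • v + K v := by simp [hB]
    rw [h1, lp.coeFn_add, lp.coeFn_smul]
    simp only [Pi.add_apply, Pi.smul_apply, smul_eq_mul]
    rw [hKvi]
    have hsub : (∑' l : ℤ, ν ((l : ℝ) * Δx) * (v (i + l) - v i))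
        = (∑' l : ℤ, ν ((l : ℝ) * Δx) * v (i + l)) - ∑' l : ℤ, ν ((l : ℝ) * Δx) * v i := by
      rw [← Summable.tsum_sub (hvsum v i) (hsum.mul_right (v i))]
      congr 1
      funext l
      ring
    have hconst : (∑' l : ℤ, ν ((l : ℝ) * Δx) * v i) = S * v i := by
      rw [hS, ← tsum_mul_right]
    have htsum : (∑' l : ℤ, h * Δx * ν ((l : ℝ) * Δx) * v (i + l))
        = h * Δx * ∑' l : ℤ, ν ((l : ℝ) * Δx) * v (i + l) := by
      rw [← tsum_mul_left]
      congr 1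
      funext l
      ring
    rw [htsum, hsub, hconst, ht]
    ring
  have hKnorm : ‖K‖ ≤ t := by
    rw [hK]
    calc ‖∑' l : ℤ, (h * Δx * ν ((l : ℝ) * Δx)) • T l‖
        ≤ ∑' l : ℤ, ‖(h * Δx * ν ((l : ℝ) * Δx)) • T l‖ :=
          norm_tsum_le_tsum_norm (hgsum.of_nonneg_of_le (fun l => norm_nonneg _) hKsummand_norm)
      _ ≤ ∑' l : ℤ, h * Δx * ν ((l : ℝ) * Δx) :=
          Summable.tsum_le_tsum hKsummand_norm
            (hgsum.of_nonneg_of_le (fun l => norm_nonneg _) hKsummand_norm) hgsum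
      _ = t := by rw [ht, hS]; exact tsum_mul_left
  have hBnorm : ‖B‖ ≤ 1 + 2 * (S * Δx) * h := by
    have h1 : ‖B‖ ≤ ‖(1 - t) • ContinuousLinearMap.id ℝ H‖ + ‖K‖ := norm_add_le _ _
    have h2 : ‖(1 - t) • ContinuousLinearMap.id ℝ H‖ ≤ |1 - t| := by
      calc ‖(1 - t) • ContinuousLinearMap.id ℝ H‖
          ≤ ‖(1 - t)‖ * ‖ContinuousLinearMap.id ℝ H‖ :=
            ContinuousLinearMap.opNorm_smul_le _ _
        _ ≤ ‖(1 - t)‖ * 1 := by gcongr; exact ContinuousLinearMap.norm_id_le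
        _ = |1 - t| := by rw [mul_one, Real.norm_eq_abs]
    have h3 : |1 - t| ≤ 1 + t := by
      rw [abs_le]; constructor <;> linarith
    have : ‖B‖ ≤ (1 + t) + t := by
      calc ‖B‖ ≤ ‖(1 - t) • ContinuousLinearMap.id ℝ H‖ + ‖K‖ := h1
        _ ≤ |1 - t| + t := add_le_add h2 hKnorm
        _ ≤ (1 + t) + t := by linarith
    calc ‖B‖ ≤ (1 + t) + t := this
      _ = 1 + 2 * (S * Δx) * h := by rw [ht]; ring
  exact ⟨A, Ainv, B, hA_apply, hleft, hright, hAinvnorm, hB_apply, hBnorm⟩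

end
end

section
/- Let h > 0, Δx > 0, let α, β ∈ ℝ with β ≥ 0, and let ν̃ : ℝ → [0,∞) be such that S := Σ_{l∈ℤ} ν̃(lΔx)Δx < ∞. Define linear operators A and B on l_∞(ℤ) by (Av)_i = −(β + |α|·1_{α<0}) v_{i−1} + (1 + 2β + |α|) v_i − (β + |α|·1_{α>0}) v_{i+1} and (Bv)_i = v_i + hΔx Σ_{l∈ℤ} ν̃(lΔx)(v_{i+l} − v_i). Then A is a bounded bijection of l_∞(ℤ) whose inverse satisfies |A^{−1}|_∞ ≤ 1, and |B|_∞ ≤ 1 + 2Sh. If moreover hΔx Σ_{l∈ℤ, l≠0} ν̃(lΔx) ≤ 1, then Π = A^{−1}B is a stochastic operator: its matrix entries Π_{ij} (defined by Π_{ij} = (Π e_j)_i for the coordinate sequences e_j) satisfy Π_{ij} ≥ 0 for all i, j ∈ ℤ and Σ_{j∈ℤ} Π_{ij} = 1 for every i ∈ ℤ. -/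
open scoped ENNReal

noncomputable section

namespace Stmt19Aux

abbrev L : Type := lp (fun _ : ℤ => ℝ) ∞

instance : Nontrivial L := by
  refine ⟨lp.single ∞ (0:ℤ) (1:ℝ), 0, fun hc => ?_⟩
  have := congrArg (fun f : L => (f : ℤ → ℝ) 0) hc
  simp [lp.single_apply_self] at this

lemma abs_eval_le (v : L) (i : ℤ) : |v i| ≤ ‖v‖ := by
  simpa using lp.norm_apply_le_norm ENNReal.top_ne_zero v i

lemma coe_add (v w : L) (i : ℤ) : (v + w) i = v i + w i := by
  have := congrFun (lp.coeFn_add v w) i; simpa using this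

lemma coe_smul (c : ℝ) (v : L) (i : ℤ) : (c • v) i = c * v i := by
  have := congrFun (lp.coeFn_smul c v) i; simpa using this

lemma coe_sub (v w : L) (i : ℤ) : (v - w) i = v i - w i := by
  have := congrFun (lp.coeFn_sub v w) i; simpa using this

def mkOp (F : L → ℤ → ℝ) (C : ℝ) (hC : 0 ≤ C)
    (hb : ∀ v i, |F v i| ≤ C * ‖v‖)
    (hadd : ∀ v w i, F (v + w) i = F v i + F w i)
    (hsmul : ∀ (c : ℝ) v i, F (c • v) i = c * F v i) : L →L[ℝ] L :=
  LinearMap.mkContinuous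
    { toFun := fun v => (⟨F v, memℓp_infty ⟨C * ‖v‖, by
        rintro x ⟨i, rfl⟩; simpa using hb v i⟩⟩ : L)
      map_add' := fun v w => lp.ext (funext fun i => hadd v w i)
      map_smul' := fun c v => lp.ext (funext fun i => hsmul c v i) }
    C (fun v => lp.norm_le_of_forall_le (mul_nonneg hC (norm_nonneg v)) fun i => by
      simpa using hb v i)

@[simp] lemma mkOp_apply (F : L → ℤ → ℝ) (C hC hb hadd hsmul) (v : L) (i : ℤ) :
    mkOp F C hC hb hadd hsmul v i = F v i := rfl

lemma mkOp_norm_le (F : L → ℤ → ℝ) (C hC hb hadd hsmul) :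
    ‖mkOp F C hC hb hadd hsmul‖ ≤ C :=
  LinearMap.mkContinuous_norm_le _ hC _

/-- coordinate evaluation as a continuous linear map -/
def ev (i : ℤ) : L →L[ℝ] ℝ :=
  LinearMap.mkContinuous
    { toFun := fun v => v i
      map_add' := fun v w => coe_add v w i
      map_smul' := fun c v => coe_smul c v i }
    1 (fun v => by simpa using abs_eval_le v i)

@[simp] lemma ev_apply (i : ℤ) (v : L) : ev i v = v i := rfl

variable {p q : ℝ}

def Kop (p q : ℝ) (hp : 0 ≤ p) (hq : 0 ≤ q) : L →L[ℝ] L :=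
  mkOp (fun v i => p * v (i - 1) + q * v (i + 1)) (p + q) (by positivity)
    (fun v i => by
      calc |p * v (i-1) + q * v (i+1)| ≤ p * |v (i-1)| + q * |v (i+1)| := by
            refine (abs_add_le _ _).trans ?_
            rw [abs_mul, abs_mul, abs_of_nonneg hp, abs_of_nonneg hq]
        _ ≤ p * ‖v‖ + q * ‖v‖ := by
            gcongr
            · exact abs_eval_le v _
            · exact abs_eval_le v _
        _ = (p + q) * ‖v‖ := by ring)
    (fun v w i => by simp only []; rw [coe_add, coe_add]; ring)
    (fun c v i => by simp only []; rw [coe_smul, coe_smul]; ring)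

lemma Kop_apply (hp : 0 ≤ p) (hq : 0 ≤ q) (v : L) (i : ℤ) :
    Kop p q hp hq v i = p * v (i - 1) + q * v (i + 1) := rfl

lemma Kop_norm_le (hp : 0 ≤ p) (hq : 0 ≤ q) : ‖Kop p q hp hq‖ ≤ p + q :=
  mkOp_norm_le _ _ _ _ _ _

lemma Kop_pow_nonneg (hp : 0 ≤ p) (hq : 0 ≤ q) (n : ℕ) :
    ∀ (v : L), (∀ l, 0 ≤ v l) → ∀ i, 0 ≤ ((Kop p q hp hq)^n) v i := by
  induction n with
  | zero => intro v hv i; rw [pow_zero, ContinuousLinearMap.one_apply]; exact hv i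
  | succ n ih =>
      intro v hv i
      rw [pow_succ, ContinuousLinearMap.mul_apply]
      refine ih _ (fun l => ?_) i
      rw [Kop_apply]
      have := hv (l-1); have := hv (l+1); positivity

lemma Kop_pow_norm (hp : 0 ≤ p) (hq : 0 ≤ q) (n : ℕ) :
    ∀ (v : L), ‖((Kop p q hp hq)^n) v‖ ≤ (p+q)^n * ‖v‖ := by
  induction n with
  | zero => intro v; simp
  | succ n ih =>
      intro v
      rw [pow_succ, ContinuousLinearMap.mul_apply]
      calc ‖((Kop p q hp hq)^n) ((Kop p q hp hq) v)‖ ≤ (p+q)^n * ‖(Kop p q hp hq) v‖ := ih _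
        _ ≤ (p+q)^n * ((p+q) * ‖v‖) := by
            have h1 : ‖(Kop p q hp hq) v‖ ≤ (p+q) * ‖v‖ :=
              ((Kop p q hp hq).le_opNorm v).trans
                (mul_le_mul_of_nonneg_right (Kop_norm_le hp hq) (norm_nonneg v))
            have h2 : (0:ℝ) ≤ (p+q)^n := by positivity
            nlinarith [norm_nonneg ((Kop p q hp hq) v)]
        _ = (p+q)^(n+1) * ‖v‖ := by ring

lemma Kop_pow_rowsum (hp : 0 ≤ p) (hq : 0 ≤ q) (u : ℤ → L)
    (husum : ∀ l, Summable fun j => u j l) (hrow : ∀ l, ∑' j, u j l = 1) (n : ℕ) :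
    ∀ i, Summable (fun j => ((Kop p q hp hq)^n) (u j) i) ∧
      ∑' j, ((Kop p q hp hq)^n) (u j) i = (p+q)^n := by
  induction n with
  | zero =>
      intro i
      constructor
      · refine (husum i).congr fun j => ?_
        rw [pow_zero, ContinuousLinearMap.one_apply]
      · rw [pow_zero]
        simp only [ContinuousLinearMap.one_apply]
        exact hrow i
  | succ n ih =>
      intro i
      have h1 := ih (i-1); have h2 := ih (i+1)
      have heq : ∀ j, ((Kop p q hp hq)^(n+1)) (u j) i
          = p * ((Kop p q hp hq)^n) (u j) (i-1) + q * ((Kop p q hp hq)^n) (u j) (i+1) := by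
        intro j
        rw [pow_succ', ContinuousLinearMap.mul_apply, Kop_apply]
      have hsummable : Summable (fun j => p * ((Kop p q hp hq)^n) (u j) (i-1)
          + q * ((Kop p q hp hq)^n) (u j) (i+1)) := (h1.1.mul_left p).add (h2.1.mul_left q)
      constructor
      · exact hsummable.congr fun j => (heq j).symm
      · calc ∑' j, ((Kop p q hp hq)^(n+1)) (u j) i
            = ∑' j, (p * ((Kop p q hp hq)^n) (u j) (i-1)
              + q * ((Kop p q hp hq)^n) (u j) (i+1)) := tsum_congr heq
          _ = p * ((p+q)^n) + q * ((p+q)^n) := by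
              rw [Summable.tsum_add (h1.1.mul_left p) (h2.1.mul_left q), tsum_mul_left, tsum_mul_left,
                h1.2, h2.2]
          _ = (p+q)^(n+1) := by ring

end Stmt19Aux

open Stmt19Aux

set_option maxHeartbeats 4000000 in
set_option synthInstance.maxHeartbeats 2000000 in
/- STATEMENT 19: the implicit upwind finite-difference operator `A` is a bounded
bijection of `l_∞(ℤ)` with `|A⁻¹|_∞ ≤ 1`; the explicit jump operator `B` satisfies
`|B|_∞ ≤ 1 + 2Sh`; and if `hΔx Σ_{l≠0} ν̃(lΔx) ≤ 1` then `Π = A⁻¹B` is a stochastic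
operator: its entries `Π_{ij} = (Π e_j)_i` are nonnegative with unit row sums. -/
theorem stmt_19 (h Δx α β : ℝ) (hh : 0 < h) (hΔx : 0 < Δx) (hβ : 0 ≤ β)
    (ν : ℝ → ℝ) (hν : ∀ x, 0 ≤ ν x)
    (hsum : Summable fun l : ℤ => ν ((l : ℝ) * Δx)) :
    ∃ A Ainv B : lp (fun _ : ℤ => ℝ) ∞ →L[ℝ] lp (fun _ : ℤ => ℝ) ∞,
      (∀ (v : lp (fun _ : ℤ => ℝ) ∞) (i : ℤ),
        A v i = -(β + |α| * (if α < 0 then 1 else 0)) * v (i - 1)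
          + (1 + 2 * β + |α|) * v i
          - (β + |α| * (if 0 < α then 1 else 0)) * v (i + 1)) ∧
      (∀ v, Ainv (A v) = v) ∧ (∀ v, A (Ainv v) = v) ∧ ‖Ainv‖ ≤ 1 ∧
      (∀ (v : lp (fun _ : ℤ => ℝ) ∞) (i : ℤ),
        B v i = v i + h * Δx * ∑' l : ℤ, ν ((l : ℝ) * Δx) * (v (i + l) - v i)) ∧
      ‖B‖ ≤ 1 + 2 * ((∑' l : ℤ, ν ((l : ℝ) * Δx)) * Δx) * h ∧
      (h * Δx * (∑' l : {l : ℤ // l ≠ 0}, ν (((l : ℤ) : ℝ) * Δx)) ≤ 1 →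
        ∀ E : ℤ → lp (fun _ : ℤ => ℝ) ∞,
          (∀ j i : ℤ, E j i = if i = j then (1 : ℝ) else 0) →
          (∀ i j : ℤ, 0 ≤ Ainv (B (E j)) i) ∧
          ∀ i : ℤ, ∑' j : ℤ, Ainv (B (E j)) i = 1) := by
  classical
  set S : ℝ := ∑' l : ℤ, ν ((l : ℝ) * Δx) with hS_def
  have hS0 : 0 ≤ S := tsum_nonneg fun l => hν _
  set a : ℝ := β + |α| * (if α < 0 then 1 else 0) with ha_def
  set b : ℝ := β + |α| * (if 0 < α then 1 else 0) with hb_def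
  set c : ℝ := 1 + 2 * β + |α| with hc_def
  have ha : 0 ≤ a := by
    rw [ha_def]
    have : (0:ℝ) ≤ |α| * (if α < 0 then 1 else 0) :=
      mul_nonneg (abs_nonneg α) (by split <;> norm_num)
    linarith
  have hb : 0 ≤ b := by
    rw [hb_def]
    have : (0:ℝ) ≤ |α| * (if 0 < α then 1 else 0) :=
      mul_nonneg (abs_nonneg α) (by split <;> norm_num)
    linarith
  have hab : a + b = 2 * β + |α| := by
    rcases lt_trichotomy α 0 with hα | hα | hα
    · rw [ha_def, hb_def, if_pos hα, if_neg (by linarith)]; ring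
    · rw [ha_def, hb_def, hα]; simp only [abs_zero, zero_mul, add_zero]; ring
    · rw [ha_def, hb_def, if_neg (by linarith), if_pos hα]; ring
  have hc : c = 1 + (a + b) := by rw [hc_def, hab]; ring
  have hc0 : 0 < c := by nlinarith
  set p := a / c with hp_def
  set q := b / c with hq_def
  have hp : 0 ≤ p := div_nonneg ha hc0.le
  have hq : 0 ≤ q := div_nonneg hb hc0.le
  have hr1 : p + q < 1 := by
    rw [hp_def, hq_def, ← add_div, div_lt_one hc0]; linarith
  have hr0 : 0 ≤ p + q := by linarith
  set K := Kop p q hp hq with hK_def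
  have hKnorm : ‖K‖ < 1 := lt_of_le_of_lt (Kop_norm_le hp hq) hr1
  set U : (L →L[ℝ] L)ˣ := Units.oneSub K hKnorm with hU_def
  set A : L →L[ℝ] L := c • ((1 : L →L[ℝ] L) - K) with hA_def
  set Ainv : L →L[ℝ] L := c⁻¹ • (↑U⁻¹ : L →L[ℝ] L) with hAinv_def
  have hUval : (↑U : L →L[ℝ] L) = (1 : L →L[ℝ] L) - K := rfl
  have hUinv : (↑U⁻¹ : L →L[ℝ] L) = ∑' n : ℕ, K ^ n := rfl
  have hpow : ∀ n : ℕ, ‖K ^ n‖ ≤ (p + q) ^ n := fun n =>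
    ContinuousLinearMap.opNorm_le_bound _ (by positivity) (fun v => Kop_pow_norm hp hq n v)
  have hKsummable : Summable (fun n : ℕ => K ^ n) :=
    Summable.of_norm_bounded (summable_geometric_of_lt_one hr0 hr1) hpow
  have hsum_eval : ∀ (v : L) (i : ℤ), Summable fun n : ℕ => (K ^ n) v i := by
    intro v i
    refine Summable.of_norm_bounded
      ((summable_geometric_of_lt_one hr0 hr1).mul_right ‖v‖) (fun n => ?_)
    have h1 := abs_eval_le ((K ^ n) v) i
    have h2 := Kop_pow_norm hp hq n v
    rw [Real.norm_eq_abs]; linarith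
  have hAinv_eval : ∀ (v : L) (i : ℤ), Ainv v i = c⁻¹ * ∑' n : ℕ, (K ^ n) v i := by
    intro v i
    have h2 : (∑' n : ℕ, K ^ n) v = ∑' n : ℕ, (K ^ n) v := by
      simpa using ((ContinuousLinearMap.apply ℝ L v).map_tsum hKsummable)
    have hsummv : Summable fun n : ℕ => (K ^ n) v :=
      Summable.of_norm_bounded ((summable_geometric_of_lt_one hr0 hr1).mul_right ‖v‖)
        (fun n => Kop_pow_norm hp hq n v)
    have h3 : (∑' n : ℕ, (K ^ n) v) i = ∑' n : ℕ, ((K ^ n) v) i := by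
      simpa using (ev i).map_tsum hsummv
    rw [hAinv_def]
    rw [ContinuousLinearMap.smul_apply, coe_smul, hUinv, h2, h3]
  have hkey : c * (1 - (p + q)) = 1 := by
    rw [hp_def, hq_def, ← add_div, mul_sub, mul_one, mul_div_cancel₀ _ hc0.ne']
    linarith
  have hcinv : c⁻¹ * (1 - (p + q))⁻¹ = 1 := by
    rw [← mul_inv, hkey, inv_one]
  -- the B operator
  have hsummB : ∀ (v : L) (i : ℤ), Summable fun l : ℤ => ν ((l : ℝ) * Δx) * (v (i + l) - v i) := by
    intro v i
    refine Summable.of_norm_bounded (hsum.mul_right (2 * ‖v‖)) (fun l => ?_)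
    rw [Real.norm_eq_abs, abs_mul, abs_of_nonneg (hν _)]
    have h1 : |v (i + l) - v i| ≤ 2 * ‖v‖ := by
      have := abs_eval_le v (i + l); have := abs_eval_le v i
      have := abs_sub (v (i + l)) (v i)
      calc |v (i + l) - v i| ≤ |v (i + l)| + |v i| := abs_sub _ _
        _ ≤ 2 * ‖v‖ := by linarith
    exact mul_le_mul_of_nonneg_left h1 (hν _)
  have hCB : (0:ℝ) ≤ 1 + 2 * (S * Δx) * h := by positivity
  have hbB : ∀ (v : L) (i : ℤ),
      |v i + h * Δx * ∑' l : ℤ, ν ((l : ℝ) * Δx) * (v (i + l) - v i)|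
        ≤ (1 + 2 * (S * Δx) * h) * ‖v‖ := by
    intro v i
    have htail : |∑' l : ℤ, ν ((l : ℝ) * Δx) * (v (i + l) - v i)| ≤ S * (2 * ‖v‖) := by
      rw [← Real.norm_eq_abs]
      refine tsum_of_norm_bounded (g := fun l : ℤ => ν ((l : ℝ) * Δx) * (2 * ‖v‖)) ?_ (fun l => ?_)
      · have h0 := hsum.hasSum.mul_right (2 * ‖v‖)
        rw [hS_def]
        exact h0
      · rw [Real.norm_eq_abs, abs_mul, abs_of_nonneg (hν _)]
        have h1 : |v (i + l) - v i| ≤ 2 * ‖v‖ := by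
          have := abs_eval_le v (i + l); have := abs_eval_le v i
          calc |v (i + l) - v i| ≤ |v (i + l)| + |v i| := abs_sub _ _
            _ ≤ 2 * ‖v‖ := by linarith
        exact mul_le_mul_of_nonneg_left h1 (hν _)
    have h2 := abs_eval_le v i
    calc |v i + h * Δx * ∑' l : ℤ, ν ((l : ℝ) * Δx) * (v (i + l) - v i)|
        ≤ |v i| + |h * Δx| * |∑' l : ℤ, ν ((l : ℝ) * Δx) * (v (i + l) - v i)| := by
          rw [← abs_mul]; exact abs_add_le _ _
      _ ≤ ‖v‖ + (h * Δx) * (S * (2 * ‖v‖)) := by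
          have hhd : |h * Δx| = h * Δx := abs_of_nonneg (by positivity)
          rw [hhd]
          have := mul_le_mul_of_nonneg_left htail (le_of_lt (by positivity : (0:ℝ) < h * Δx))
          linarith
      _ = (1 + 2 * (S * Δx) * h) * ‖v‖ := by ring
  have haddB : ∀ (v w : L) (i : ℤ),
      ((v + w : L) i + h * Δx * ∑' l : ℤ, ν ((l : ℝ) * Δx) * ((v + w : L) (i + l) - (v + w : L) i))
        = (v i + h * Δx * ∑' l : ℤ, ν ((l : ℝ) * Δx) * (v (i + l) - v i))
          + (w i + h * Δx * ∑' l : ℤ, ν ((l : ℝ) * Δx) * (w (i + l) - w i)) := by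
    intro v w i
    have ht : ∑' l : ℤ, ν ((l : ℝ) * Δx) * ((v + w : L) (i + l) - (v + w : L) i)
        = ∑' l : ℤ, (ν ((l : ℝ) * Δx) * (v (i + l) - v i) + ν ((l : ℝ) * Δx) * (w (i + l) - w i)) := by
      refine tsum_congr fun l => ?_
      rw [coe_add, coe_add]; ring
    rw [ht, Summable.tsum_add (hsummB v i) (hsummB w i), coe_add]; ring
  have hsmulB : ∀ (t : ℝ) (v : L) (i : ℤ),
      ((t • v : L) i + h * Δx * ∑' l : ℤ, ν ((l : ℝ) * Δx) * ((t • v : L) (i + l) - (t • v : L) i))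
        = t * (v i + h * Δx * ∑' l : ℤ, ν ((l : ℝ) * Δx) * (v (i + l) - v i)) := by
    intro t v i
    have ht : ∑' l : ℤ, ν ((l : ℝ) * Δx) * ((t • v : L) (i + l) - (t • v : L) i)
        = ∑' l : ℤ, t * (ν ((l : ℝ) * Δx) * (v (i + l) - v i)) := by
      refine tsum_congr fun l => ?_
      rw [coe_smul, coe_smul]; ring
    rw [ht, tsum_mul_left, coe_smul]; ring
  set B : L →L[ℝ] L := mkOp
    (fun v i => v i + h * Δx * ∑' l : ℤ, ν ((l : ℝ) * Δx) * (v (i + l) - v i))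
    (1 + 2 * (S * Δx) * h) hCB hbB haddB hsmulB with hB_def
  refine ⟨A, Ainv, B, ?_, ?_, ?_, ?_, ?_, ?_, ?_⟩
  · -- A formula
    intro v i
    rw [hA_def, ContinuousLinearMap.smul_apply, coe_smul, ContinuousLinearMap.sub_apply,
      coe_sub, ContinuousLinearMap.one_apply, hK_def, Kop_apply, hp_def, hq_def,
      ha_def, hb_def]
    rcases lt_trichotomy α 0 with hα | hα | hα
    · rw [if_pos hα, if_neg (show ¬ 0 < α by linarith)]; field_simp; ring
    · rw [if_neg (show ¬ α < 0 by simp [hα]), if_neg (show ¬ 0 < α by simp [hα])]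
      field_simp; ring
    · rw [if_neg (show ¬ α < 0 by linarith), if_pos hα]; field_simp; ring
  · -- Ainv ∘ A
    intro v
    rw [hAinv_def, hA_def, ContinuousLinearMap.smul_apply, ContinuousLinearMap.smul_apply,
      map_smul, smul_smul, inv_mul_cancel₀ hc0.ne', one_smul]
    have h1 : ((1 : L →L[ℝ] L) - K) v = (↑U : L →L[ℝ] L) v := rfl
    rw [h1, ← ContinuousLinearMap.mul_apply, U.inv_mul, ContinuousLinearMap.one_apply]
  · -- A ∘ Ainv
    intro v
    rw [hAinv_def, hA_def, ContinuousLinearMap.smul_apply, ContinuousLinearMap.smul_apply,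
      map_smul, smul_smul, mul_inv_cancel₀ hc0.ne', one_smul]
    have h1 : ∀ w : L, ((1 : L →L[ℝ] L) - K) w = (↑U : L →L[ℝ] L) w := fun w => rfl
    rw [h1, ← ContinuousLinearMap.mul_apply, U.mul_inv, ContinuousLinearMap.one_apply]
  · -- norm Ainv
    have h1 : ‖(↑U⁻¹ : L →L[ℝ] L)‖ ≤ (1 - (p + q))⁻¹ := by
      rw [hUinv]
      exact tsum_of_norm_bounded (hasSum_geometric_of_lt_one hr0 hr1) hpow
    have h2 : ‖Ainv‖ ≤ c⁻¹ * (1 - (p + q))⁻¹ := by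
      have hpos : (0:ℝ) < 1 - (p + q) := by linarith
      refine ContinuousLinearMap.opNorm_le_bound Ainv (by positivity) (fun v => ?_)
      have hv : Ainv v = c⁻¹ • ((↑U⁻¹ : L →L[ℝ] L) v) := rfl
      rw [hv, norm_smul, Real.norm_eq_abs, abs_of_nonneg (by positivity : (0:ℝ) ≤ c⁻¹)]
      have h3 : ‖(↑U⁻¹ : L →L[ℝ] L) v‖ ≤ (1 - (p + q))⁻¹ * ‖v‖ :=
        ((↑U⁻¹ : L →L[ℝ] L).le_opNorm v).trans
          (mul_le_mul_of_nonneg_right h1 (norm_nonneg v))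
      calc c⁻¹ * ‖(↑U⁻¹ : L →L[ℝ] L) v‖ ≤ c⁻¹ * ((1 - (p + q))⁻¹ * ‖v‖) :=
            mul_le_mul_of_nonneg_left h3 (by positivity)
        _ = c⁻¹ * (1 - (p + q))⁻¹ * ‖v‖ := by ring
    rw [← hcinv]; exact h2
  · -- B formula
    intro v i
    rw [hB_def, mkOp_apply]
  · -- norm B
    exact mkOp_norm_le _ _ _ _ _ _
  · -- stochastic part
    intro hsle E hE
    -- kernel formula for B (E j)
    have hu : ∀ j l : ℤ, (B (E j)) l
        = (1 - h * Δx * S) * (if l = j then 1 else 0) + h * Δx * ν (((j - l : ℤ) : ℝ) * Δx) := by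
      intro j l
      have hs1 : Summable fun m : ℤ => ν ((m : ℝ) * Δx) * (E j) (l + m) := by
        refine summable_of_ne_finset_zero (s := ({j - l} : Finset ℤ)) (fun m hm => ?_)
        have hm' : m ≠ j - l := by simpa using hm
        rw [hE, if_neg (show ¬ (l + m = j) by omega), mul_zero]
      have ht1 : ∑' m : ℤ, ν ((m : ℝ) * Δx) * (E j) (l + m) = ν (((j - l : ℤ) : ℝ) * Δx) := by
        rw [tsum_eq_single (j - l) (fun m hm => by
          rw [hE, if_neg (show ¬ (l + m = j) by omega), mul_zero])]
        rw [hE, if_pos (by omega), mul_one]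
      have hs2 : Summable fun m : ℤ => ν ((m : ℝ) * Δx) * (E j) l := hsum.mul_right _
      have ht2 : ∑' m : ℤ, ν ((m : ℝ) * Δx) * (E j) l = S * (E j) l := by
        rw [tsum_mul_right, hS_def]
      have hsplit : ∑' m : ℤ, ν ((m : ℝ) * Δx) * ((E j) (l + m) - (E j) l)
          = ν (((j - l : ℤ) : ℝ) * Δx) - S * (E j) l := by
        have : (fun m : ℤ => ν ((m : ℝ) * Δx) * ((E j) (l + m) - (E j) l))
            = fun m : ℤ => ν ((m : ℝ) * Δx) * (E j) (l + m) - ν ((m : ℝ) * Δx) * (E j) l := by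
          funext m; ring
        rw [this, Summable.tsum_sub hs1 hs2, ht1, ht2]
      rw [hB_def, mkOp_apply, hsplit, hE]
      ring
    -- split off the l = 0 term of S
    have hTeq : (∑' l : {l : ℤ // l ≠ 0}, ν (((l : ℤ) : ℝ) * Δx))
        = ∑' l : ℤ, (if l = 0 then 0 else ν ((l : ℝ) * Δx)) := by
      have h0 := tsum_subtype {l : ℤ | l ≠ 0} (fun l : ℤ => ν ((l : ℝ) * Δx))
      refine Eq.trans ?_ (h0.trans ?_)
      · rfl
      · exact tsum_congr fun l => by by_cases hl : l = 0 <;> simp [Set.indicator_apply, hl]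
    have hsplitS : S = ν (((0 : ℤ) : ℝ) * Δx)
        + ∑' l : ℤ, (if l = 0 then 0 else ν ((l : ℝ) * Δx)) := Summable.tsum_eq_add_tsum_ite hsum 0
    have hdiag : 0 ≤ 1 - h * Δx * S + h * Δx * ν (((0 : ℤ) : ℝ) * Δx) := by
      rw [← hTeq] at hsplitS
      nlinarith [hsle, mul_pos hh hΔx]
    have hu_nonneg : ∀ j l : ℤ, 0 ≤ (B (E j)) l := by
      intro j l
      rw [hu]
      by_cases hlj : l = j
      · subst hlj
        rw [if_pos rfl, mul_one]
        have : (l - l : ℤ) = 0 := by omega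
        rw [this]
        linarith
      · rw [if_neg hlj, mul_zero]
        have h4 := mul_nonneg (mul_nonneg hh.le hΔx.le) (hν (((j - l : ℤ) : ℝ) * Δx))
        linarith
    have hu_summ : ∀ l : ℤ, Summable fun j : ℤ => (B (E j)) l := by
      intro l
      refine Summable.congr ?_ (fun j => (hu j l).symm)
      refine Summable.add ?_ ?_
      · refine summable_of_ne_finset_zero (s := ({l} : Finset ℤ)) (fun j hj => ?_)
        have hj' : j ≠ l := by simpa using hj
        rw [if_neg (show ¬ l = j by omega), mul_zero]
      · refine Summable.mul_left _ ?_
        refine ((Equiv.addRight l).summable_iff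
          (f := fun j : ℤ => ν (((j - l : ℤ) : ℝ) * Δx))).mp ?_
        refine hsum.congr fun m => ?_
        show ν ((m : ℝ) * Δx) = ν (((m + l - l : ℤ) : ℝ) * Δx)
        congr 2
        push_cast; ring
    have hu_row : ∀ l : ℤ, ∑' j : ℤ, (B (E j)) l = 1 := by
      intro l
      rw [tsum_congr (fun j => hu j l)]
      have hs1 : Summable fun j : ℤ => (1 - h * Δx * S) * (if l = j then (1:ℝ) else 0) := by
        refine summable_of_ne_finset_zero (s := ({l} : Finset ℤ)) (fun j hj => ?_)
        have hj' : j ≠ l := by simpa using hj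
        rw [if_neg (show ¬ l = j by omega), mul_zero]
      have hs2 : Summable fun j : ℤ => h * Δx * ν (((j - l : ℤ) : ℝ) * Δx) := by
        refine Summable.mul_left _ ?_
        refine ((Equiv.addRight l).summable_iff
          (f := fun j : ℤ => ν (((j - l : ℤ) : ℝ) * Δx))).mp ?_
        refine hsum.congr fun m => ?_
        show ν ((m : ℝ) * Δx) = ν (((m + l - l : ℤ) : ℝ) * Δx)
        congr 2; push_cast; ring
      rw [Summable.tsum_add hs1 hs2]
      have ht1 : ∑' j : ℤ, (1 - h * Δx * S) * (if l = j then (1:ℝ) else 0) = 1 - h * Δx * S := by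
        rw [tsum_eq_single l (fun j hj => by rw [if_neg (show ¬ l = j by omega), mul_zero]),
          if_pos rfl, mul_one]
      have ht2 : ∑' j : ℤ, h * Δx * ν (((j - l : ℤ) : ℝ) * Δx) = h * Δx * S := by
        rw [tsum_mul_left]
        congr 1
        have := (Equiv.addRight l).tsum_eq (f := fun j : ℤ => ν (((j - l : ℤ) : ℝ) * Δx))
        rw [← this]
        rw [hS_def]
        refine tsum_congr fun m => ?_
        show ν (((m + l - l : ℤ) : ℝ) * Δx) = ν ((m : ℝ) * Δx)
        congr 2; push_cast; ring
      rw [ht1, ht2]; ring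
    refine ⟨?_, ?_⟩
    · intro i j
      rw [hAinv_eval]
      refine mul_nonneg (by positivity) (tsum_nonneg fun n => ?_)
      exact Kop_pow_nonneg hp hq n _ (hu_nonneg j) i
    · intro i
      have hKrow := fun n : ℕ => Kop_pow_rowsum hp hq (fun j => B (E j)) hu_summ hu_row n i
      set f : ℕ → ℤ → ℝ := fun n j => (K ^ n) (B (E j)) i with hf_def
      have hf0 : ∀ nj : ℕ × ℤ, 0 ≤ f nj.1 nj.2 :=
        fun nj => Kop_pow_nonneg hp hq _ _ (hu_nonneg nj.2) i
      have h₁ : ∀ n, Summable (f n) := fun n => (hKrow n).1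
      have h₂sum : Summable fun n : ℕ => ∑' j : ℤ, f n j :=
        (summable_geometric_of_lt_one hr0 hr1).congr fun n => ((hKrow n).2).symm
      have hFs : Summable (Function.uncurry f) :=
        (summable_prod_of_nonneg (fun nj => hf0 nj)).mpr ⟨h₁, h₂sum⟩
      have h₂ : ∀ j, Summable fun n => f n j := fun j => hsum_eval (B (E j)) i
      have hcomm : ∑' j : ℤ, ∑' n : ℕ, f n j = ∑' n : ℕ, ∑' j : ℤ, f n j :=
        Summable.tsum_comm' hFs h₁ h₂
      calc ∑' j : ℤ, Ainv (B (E j)) i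
          = ∑' j : ℤ, c⁻¹ * ∑' n : ℕ, f n j := tsum_congr (fun j => hAinv_eval _ i)
        _ = c⁻¹ * ∑' j : ℤ, ∑' n : ℕ, f n j := tsum_mul_left
        _ = c⁻¹ * ∑' n : ℕ, ∑' j : ℤ, f n j := by rw [hcomm]
        _ = c⁻¹ * ∑' n : ℕ, (p + q) ^ n := by rw [tsum_congr fun n => (hKrow n).2]
        _ = c⁻¹ * (1 - (p + q))⁻¹ := by rw [tsum_geometric_of_lt_one hr0 hr1]
        _ = 1 := hcinv
end
end
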